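/- arXiv:1308.2658 — 9 statements merged into one kernel-verified Lean document; each statement's English description precedes it below -/
import Mathlib

section
/- If p₁ = x + y I₁, p₂ = x + y I₂, p₃ = x + y I₃ are three quaternions on the same 2-sphere (x, y ∈ ℝ, I₁, I₂, I₃ distinct imaginary units with I² = -1) with I₁ ≠ I₂, then for every natural number n, conj(p₃)ⁿ = conj(p₁)ⁿ (I₁ - I₂)⁻¹ (I₃ - I₂) + conj(p₂)ⁿ (I₁ - I₂)⁻¹ (I₁ - I₃). -/
open Quaternion

private lemma re_eq_zero_of_sq (I : ℍ[ℝ]) (hI : I ^ 2 = -1) : I.re = 0 := by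
  rw [sq] at hI
  have e1 := congrArg QuaternionAlgebra.re hI
  have e2 := congrArg QuaternionAlgebra.imI hI
  have e3 := congrArg QuaternionAlgebra.imJ hI
  have e4 := congrArg QuaternionAlgebra.imK hI
  simp [Quaternion.re_mul, Quaternion.imI_mul, Quaternion.imJ_mul, Quaternion.imK_mul] at e1 e2 e3 e4
  by_contra hre
  have hi : I.imI = 0 := by
    have h : I.re * I.imI = 0 := by linarith
    rcases mul_eq_zero.mp h with h' | h'
    · exact absurd h' hre
    · exact h'
  have hj : I.imJ = 0 := by
    have h : I.re * I.imJ = 0 := by linarith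
    rcases mul_eq_zero.mp h with h' | h'
    · exact absurd h' hre
    · exact h'
  have hk : I.imK = 0 := by
    have h : I.re * I.imK = 0 := by linarith
    rcases mul_eq_zero.mp h with h' | h'
    · exact absurd h' hre
    · exact h'
  rw [hi, hj, hk] at e1
  nlinarith [sq_nonneg I.re]

private lemma star_eq_neg_of_sq (I : ℍ[ℝ]) (hI : I ^ 2 = -1) : star I = -I :=
  Quaternion.star_eq_neg.mpr (re_eq_zero_of_sq I hI)

private lemma lift_pow (x y : ℝ) (I : ℍ[ℝ]) (hI : I ^ 2 = -1) (n : ℕ) :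
    ((x : ℍ[ℝ]) - (y : ℍ[ℝ]) * I) ^ n
      = ((((x : ℂ) - (y : ℂ) * Complex.I) ^ n).re : ℍ[ℝ])
        + ((((x : ℂ) - (y : ℂ) * Complex.I) ^ n).im : ℍ[ℝ]) * I := by
  have hI' : I * I = -1 := by rw [← sq]; exact hI
  let φ := Complex.liftAux I hI'
  have key : ∀ z : ℂ, φ z = ((z.re : ℝ) : ℍ[ℝ]) + ((z.im : ℝ) : ℍ[ℝ]) * I := by
    intro z
    rw [Complex.liftAux_apply, Algebra.smul_def]
    rfl
  have hφ : φ ((x : ℂ) - (y : ℂ) * Complex.I) = (x : ℍ[ℝ]) - (y : ℍ[ℝ]) * I := by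
    rw [map_sub, map_mul, Complex.liftAux_apply_I]
    have hx : φ ((x : ℝ) : ℂ) = ((x : ℝ) : ℍ[ℝ]) := by simpa using φ.commutes x
    have hy : φ ((y : ℝ) : ℂ) = ((y : ℝ) : ℍ[ℝ]) := by simpa using φ.commutes y
    rw [hx, hy]
  calc ((x : ℍ[ℝ]) - (y : ℍ[ℝ]) * I) ^ n = φ (((x : ℂ) - (y : ℂ) * Complex.I) ^ n) := by
        rw [map_pow, hφ]
    _ = _ := key _

theorem sphere_kernel_identity (x y : ℝ) (I₁ I₂ I₃ : ℍ[ℝ])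
    (h1 : I₁ ^ 2 = -1) (h2 : I₂ ^ 2 = -1) (h3 : I₃ ^ 2 = -1)
    (h12 : I₁ ≠ I₂) (h13 : I₁ ≠ I₃) (h23 : I₂ ≠ I₃)
    (p₁ p₂ p₃ : ℍ[ℝ])
    (hp₁ : p₁ = (x : ℍ[ℝ]) + (y : ℍ[ℝ]) * I₁)
    (hp₂ : p₂ = (x : ℍ[ℝ]) + (y : ℍ[ℝ]) * I₂)
    (hp₃ : p₃ = (x : ℍ[ℝ]) + (y : ℍ[ℝ]) * I₃) :
    ∀ n : ℕ, (star p₃) ^ n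
      = (star p₁) ^ n * (I₁ - I₂)⁻¹ * (I₃ - I₂)
        + (star p₂) ^ n * (I₁ - I₂)⁻¹ * (I₁ - I₃) := by
  intro n
  have h1' : I₁ * I₁ = -1 := by rw [← sq]; exact h1
  have h2' : I₂ * I₂ = -1 := by rw [← sq]; exact h2
  -- star of the points
  have hstar : ∀ (I : ℍ[ℝ]), I ^ 2 = -1 →
      star ((x : ℍ[ℝ]) + (y : ℍ[ℝ]) * I) = (x : ℍ[ℝ]) - (y : ℍ[ℝ]) * I := by
    intro I hI
    rw [star_add, star_mul, star_eq_neg_of_sq I hI, Quaternion.star_coe, Quaternion.star_coe,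
      neg_mul, ← Quaternion.coe_commutes, ← sub_eq_add_neg]
  set a : ℝ := (((x : ℂ) - (y : ℂ) * Complex.I) ^ n).re with ha
  set b : ℝ := (((x : ℂ) - (y : ℂ) * Complex.I) ^ n).im with hb
  have e1 : (star p₁) ^ n = (a : ℍ[ℝ]) + (b : ℍ[ℝ]) * I₁ := by
    rw [hp₁, hstar I₁ h1]; exact lift_pow x y I₁ h1 n
  have e2 : (star p₂) ^ n = (a : ℍ[ℝ]) + (b : ℍ[ℝ]) * I₂ := by
    rw [hp₂, hstar I₂ h2]; exact lift_pow x y I₂ h2 n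
  have e3 : (star p₃) ^ n = (a : ℍ[ℝ]) + (b : ℍ[ℝ]) * I₃ := by
    rw [hp₃, hstar I₃ h3]; exact lift_pow x y I₃ h3 n
  rw [e1, e2, e3]
  set J : ℍ[ℝ] := I₁ - I₂ with hJ
  have hJ0 : J ≠ 0 := sub_ne_zero.mpr h12
  have hJJ : J⁻¹ * J = 1 := inv_mul_cancel₀ hJ0
  have hJJ' : J * J⁻¹ = 1 := mul_inv_cancel₀ hJ0
  -- key commutation facts
  have c1 : J * I₁ = -(I₂ * J) := by
    rw [hJ, sub_mul, mul_sub, h1', h2']; abel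
  have c2 : I₁ * J = -(J * I₂) := by
    rw [hJ, mul_sub, sub_mul, h1', h2']; abel
  have c2' : J * I₂ = -(I₁ * J) := by
    rw [hJ, sub_mul, mul_sub, h1', h2']; abel
  have k1 : I₁ * J⁻¹ = -(J⁻¹ * I₂) := by
    apply mul_left_cancel₀ hJ0
    rw [← mul_assoc, c1, neg_mul, mul_neg, mul_assoc I₂, hJJ', mul_one, ← mul_assoc, hJJ',
      one_mul]
  have k2 : I₂ * J⁻¹ = -(J⁻¹ * I₁) := by
    apply mul_left_cancel₀ hJ0
    rw [← mul_assoc, c2', neg_mul, mul_neg, mul_assoc I₁, hJJ', mul_one, ← mul_assoc, hJJ',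
      one_mul]
  -- the core identity
  have key : I₁ * J⁻¹ * (I₃ - I₂) + I₂ * J⁻¹ * (I₁ - I₃) = I₃ := by
    rw [k1, k2, neg_mul, neg_mul, mul_assoc, mul_assoc, ← neg_add, ← mul_add]
    have inner : I₂ * (I₃ - I₂) + I₁ * (I₁ - I₃) = -(J * I₃) := by
      rw [mul_sub, mul_sub, h1', h2', hJ, sub_mul]; abel
    rw [inner, mul_neg, neg_neg, ← mul_assoc, hJJ, one_mul]
  have keya : J⁻¹ * (I₃ - I₂) + J⁻¹ * (I₁ - I₃) = 1 := by
    rw [← mul_add]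
    have : (I₃ - I₂) + (I₁ - I₃) = J := by rw [hJ]; abel
    rw [this, hJJ]
  -- expand and conclude
  have expand : ∀ (I : ℍ[ℝ]) (M : ℍ[ℝ]),
      ((a : ℍ[ℝ]) + (b : ℍ[ℝ]) * I) * J⁻¹ * M
        = (a : ℍ[ℝ]) * (J⁻¹ * M) + (b : ℍ[ℝ]) * (I * J⁻¹ * M) := by
    intro I M
    noncomm_ring
  rw [expand I₁ (I₃ - I₂), expand I₂ (I₁ - I₃)]
  have regroup : (a : ℍ[ℝ]) * (J⁻¹ * (I₃ - I₂)) + (b : ℍ[ℝ]) * (I₁ * J⁻¹ * (I₃ - I₂))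
        + ((a : ℍ[ℝ]) * (J⁻¹ * (I₁ - I₃)) + (b : ℍ[ℝ]) * (I₂ * J⁻¹ * (I₁ - I₃)))
      = (a : ℍ[ℝ]) * (J⁻¹ * (I₃ - I₂) + J⁻¹ * (I₁ - I₃))
        + (b : ℍ[ℝ]) * (I₁ * J⁻¹ * (I₃ - I₂) + I₂ * J⁻¹ * (I₁ - I₃)) := by
    noncomm_ring
  rw [regroup, key, keya, mul_one]
end

section
/- For quaternionic power series f(p) = Σₖ pᵏ fₖ and g(p) = Σₖ pᵏ gₖ absolutely convergent on the unit ball, and any p in the ball with g(p) ≠ 0, the slice product satisfies (g ⋆ f)(p) = g(p) · f(g(p)⁻¹ p g(p)). -/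
open Quaternion

theorem star_product_pointwise (f g : ℕ → ℍ[ℝ]) (F G : ℍ[ℝ] → ℍ[ℝ])
    (hfabs : ∀ p : ℍ[ℝ], ‖p‖ < 1 → Summable fun k => ‖p ^ k * f k‖)
    (hgabs : ∀ p : ℍ[ℝ], ‖p‖ < 1 → Summable fun k => ‖p ^ k * g k‖)
    (hF : ∀ p : ℍ[ℝ], ‖p‖ < 1 → HasSum (fun k => p ^ k * f k) (F p))
    (hG : ∀ p : ℍ[ℝ], ‖p‖ < 1 → HasSum (fun k => p ^ k * g k) (G p))
    (p : ℍ[ℝ]) (hp : ‖p‖ < 1) (hGp : G p ≠ 0) :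
    HasSum (fun k => p ^ k * ∑ r ∈ Finset.range (k + 1), g r * f (k - r))
      (G p * F ((G p)⁻¹ * p * G p)) := by
  set u := G p with hu
  set q := u⁻¹ * p * u with hq
  have hune : ‖u‖ ≠ 0 := norm_ne_zero_iff.mpr hGp
  have hqnorm : ‖q‖ < 1 := by
    have : ‖q‖ = ‖p‖ := by
      rw [hq, norm_mul, norm_mul, norm_inv]
      field_simp
    rwa [this]
  have hconj : ∀ k : ℕ, p ^ k * u = u * q ^ k := by
    intro k
    induction k with
    | zero => simp
    | succ k ih =>
      have : u * q ^ (k + 1) = (u * q ^ k) * q := by rw [pow_succ, mul_assoc]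
      rw [this, ← ih, hq, pow_succ]
      rw [mul_assoc (p ^ k) u, mul_assoc (p ^ k) p u]
      congr 1
      rw [← mul_assoc, ← mul_assoc, mul_inv_cancel₀ hGp, one_mul]
  -- the double family
  set a : ℕ × ℕ → ℍ[ℝ] := fun x => p ^ (x.1 + x.2) * (g x.2 * f x.1) with ha_def
  have hanorm : Summable fun x : ℕ × ℕ => ‖a x‖ := by
    have h := Summable.mul_of_nonneg (hfabs p hp) (hgabs p hp)
      (fun _ => norm_nonneg _) (fun _ => norm_nonneg _)
    refine h.congr fun x => ?_
    simp [ha_def, norm_mul, pow_add, norm_pow]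
    ring
  have ha : Summable a := hanorm.of_norm
  have hfib : ∀ k : ℕ, HasSum (fun r => a (k, r)) (u * q ^ k * f k) := by
    intro k
    have h1 : HasSum (fun r => p ^ k * (p ^ r * g r) * f k) (p ^ k * u * f k) :=
      ((hG p hp).mul_left (p ^ k)).mul_right (f k)
    rw [hconj k] at h1
    refine h1.congr_fun fun r => ?_
    simp [ha_def, pow_add, mul_assoc]
  have htot : HasSum (fun k => u * q ^ k * f k) (u * F q) := by
    simpa [mul_assoc] using (hF q hqnorm).mul_left u
  have hsum_eq : ∑' x, a x = u * F q :=
    (ha.hasSum.prod_fiberwise hfib).unique htot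
  have haT : HasSum a (u * F q) := hsum_eq ▸ ha.hasSum
  -- now sum along antidiagonals
  have hSig : HasSum (fun x : (Σ n : ℕ, ↥(Finset.HasAntidiagonal.antidiagonal n)) => a (x.2 : ℕ × ℕ))
      (u * F q) :=
    ((Finset.HasAntidiagonal.sigmaAntidiagonalEquivProd (A := ℕ)).hasSum_iff (f := a)
      (a := u * F q)).mpr haT
  have hdiag : HasSum (fun n => ∑ kl ∈ Finset.HasAntidiagonal.antidiagonal n, a kl) (u * F q) := by
    refine hSig.sigma fun n => ?_
    rw [← Finset.sum_finset_coe]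
    exact hasSum_fintype _
  refine hdiag.congr_fun fun n => ?_
  rw [Finset.Nat.sum_antidiagonal_eq_sum_range_succ (fun i j => a (i, j)) n]
  rw [Finset.mul_sum]
  rw [← Finset.sum_range_reflect (fun r => p ^ n * (g r * f (n - r))) (n + 1)]
  refine Finset.sum_congr rfl fun j hj => ?_
  have hj' : j ≤ n := Nat.lt_succ_iff.mp (Finset.mem_range.mp hj)
  simp only [ha_def]
  have h1 : n + 1 - 1 - j = n - j := by omega
  have h2 : n - (n - j) = j := by omega
  have h3 : j + (n - j) = n := by omega
  rw [h1, h2, h3]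
end

section
/- Let p₁, ..., pₙ be distinct quaternions. The Vandermonde matrix V = [pᵢ^{j-1}]_{i,j=1}^{n} over ℍ has right-linearly independent rows if and only if no three of the points p₁, ..., pₙ are pairwise conjugate (i.e., no three lie on the same 2-sphere [p] = {h⁻¹ p h : h ≠ 0}). -/
open Quaternion

/-- Characteristic identity for quaternions. -/
private lemma quat_char (q : ℍ[ℝ]) :
    q * q = ((2 * q.re : ℝ) : ℍ[ℝ]) * q - ((normSq q : ℝ) : ℍ[ℝ]) := by
  ext <;>
    simp [Quaternion.re_mul, Quaternion.imI_mul, Quaternion.imJ_mul, Quaternion.imK_mul,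
      normSq_def', ← Quaternion.coe_pow, Quaternion.re_coe, Quaternion.imI_coe,
      Quaternion.imJ_coe, Quaternion.imK_coe] <;> ring

private lemma quat_re_mul_comm (a b : ℍ[ℝ]) : (a * b).re = (b * a).re := by
  simp [Quaternion.re_mul]; ring

private lemma quat_conj_re {a h : ℍ[ℝ]} (hh : h ≠ 0) : (h⁻¹ * a * h).re = a.re := by
  rw [mul_assoc, quat_re_mul_comm, mul_assoc, mul_inv_cancel₀ hh, mul_one]

private lemma quat_conj_normSq {a h : ℍ[ℝ]} (hh : h ≠ 0) :
    normSq (h⁻¹ * a * h) = normSq a := by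
  rw [map_mul, map_mul, map_inv₀]
  have hns : normSq h ≠ 0 := by simpa [Quaternion.normSq_eq_zero] using hh
  field_simp

private lemma quat_pow_step (q : ℍ[ℝ]) (t s : ℝ)
    (hq : q * q = (t : ℍ[ℝ]) * q - (s : ℍ[ℝ])) (m : ℕ) :
    q ^ (m + 2) = (t : ℍ[ℝ]) * q ^ (m + 1) - (s : ℍ[ℝ]) * q ^ m := by
  have h1 : q ^ (m + 2) = q ^ m * (q * q) := by
    rw [pow_succ, pow_succ, mul_assoc]
  have c1 : q ^ m * ((t : ℍ[ℝ]) * q) = (t : ℍ[ℝ]) * q ^ (m + 1) := by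
    rw [← mul_assoc, ← Quaternion.coe_commutes, mul_assoc, ← pow_succ]
  have c2 : q ^ m * (s : ℍ[ℝ]) = (s : ℍ[ℝ]) * q ^ m :=
    (Quaternion.coe_commutes _ _).symm
  rw [h1, hq, mul_sub, c1, c2]

private lemma two_step (t s : ℝ) (S : ℕ → ℍ[ℝ]) (h0 : S 0 = 0) (h1 : S 1 = 0)
    (hstep : ∀ m, S (m + 2) = (t : ℍ[ℝ]) * S (m + 1) - (s : ℍ[ℝ]) * S m) :
    ∀ m, S m = 0 := by
  intro m
  induction m using Nat.strong_induction_on with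
  | _ m ih =>
    match m with
    | 0 => exact h0
    | 1 => exact h1
    | (k + 2) => rw [hstep k, ih (k + 1) (by omega), ih k (by omega)]; simp

/-- The main induction: no three pairwise conjugate implies right independence of rows. -/
private lemma indep_aux : ∀ (n : ℕ) (p : Fin n → ℍ[ℝ]), Function.Injective p →
    (¬ ∃ i j k : Fin n, i ≠ j ∧ j ≠ k ∧ i ≠ k ∧
        (∃ h : ℍ[ℝ], h ≠ 0 ∧ p j = h⁻¹ * p i * h) ∧
        (∃ h : ℍ[ℝ], h ≠ 0 ∧ p k = h⁻¹ * p i * h)) →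
    ∀ α : Fin n → ℍ[ℝ],
      (∀ j : Fin n, ∑ i : Fin n, p i ^ (j : ℕ) * α i = 0) → α = 0 := by
  intro n
  induction n with
  | zero => intro p _ _ α _; funext i; exact i.elim0
  | succ n IH =>
    intro p hinj hns α hα
    have T : ∀ m : ℕ, m ≤ n →
        (∑ i : Fin n, p i.castSucc ^ m * α i.castSucc)
          + p (Fin.last n) ^ m * α (Fin.last n) = 0 := by
      intro m hm
      have h := hα ⟨m, Nat.lt_succ_of_le hm⟩
      rwa [Fin.sum_univ_castSucc] at h
    have hq : Function.Injective (fun i : Fin n => p i.castSucc) :=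
      fun a b hab => Fin.castSucc_injective n (hinj hab)
    have hnsq : ¬ ∃ i j k : Fin n, i ≠ j ∧ j ≠ k ∧ i ≠ k ∧
        (∃ h : ℍ[ℝ], h ≠ 0 ∧ p j.castSucc = h⁻¹ * p i.castSucc * h) ∧
        (∃ h : ℍ[ℝ], h ≠ 0 ∧ p k.castSucc = h⁻¹ * p i.castSucc * h) := by
      rintro ⟨i, j, k, h1, h2, h3, w1, w2⟩
      exact hns ⟨i.castSucc, j.castSucc, k.castSucc,
        fun h => h1 (Fin.castSucc_injective n h),
        fun h => h2 (Fin.castSucc_injective n h),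
        fun h => h3 (Fin.castSucc_injective n h), w1, w2⟩
    by_cases hc : α (Fin.last n) = 0
    · have hrel : ∀ j : Fin n,
          ∑ i : Fin n, (fun i : Fin n => p i.castSucc) i ^ (j : ℕ)
            * (fun i : Fin n => α i.castSucc) i = 0 := by
        intro j
        have h := T (j : ℕ) (le_of_lt j.isLt)
        simpa [hc] using h
      have h0 := IH (fun i => p i.castSucc) hq hnsq (fun i => α i.castSucc) hrel
      funext i
      refine Fin.lastCases ?_ ?_ i
      · exact hc
      · intro i; exact congrFun h0 i
    · exfalso
      set c := α (Fin.last n) with hcdef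
      set L := p (Fin.last n) with hLdef
      set d := c⁻¹ * L * c with hddef
      have hβrel : ∀ j : Fin n,
          ∑ i : Fin n, (fun i : Fin n => p i.castSucc) i ^ (j : ℕ)
            * (fun i : Fin n => p i.castSucc * α i.castSucc - α i.castSucc * d) i = 0 := by
        intro j
        have A0 : ∑ i : Fin n, p i.castSucc ^ (j : ℕ) * α i.castSucc
            = -(L ^ (j : ℕ) * c) :=
          eq_neg_of_add_eq_zero_left (T (j : ℕ) (le_of_lt j.isLt))
        have A1 : ∑ i : Fin n, p i.castSucc ^ ((j : ℕ) + 1) * α i.castSucc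
            = -(L ^ ((j : ℕ) + 1) * c) :=
          eq_neg_of_add_eq_zero_left (T ((j : ℕ) + 1) j.isLt)
        calc ∑ i : Fin n, p i.castSucc ^ (j : ℕ)
                * (p i.castSucc * α i.castSucc - α i.castSucc * d)
            = ∑ i : Fin n, (p i.castSucc ^ ((j : ℕ) + 1) * α i.castSucc
                - (p i.castSucc ^ (j : ℕ) * α i.castSucc) * d) := by
              refine Finset.sum_congr rfl fun i _ => ?_
              rw [mul_sub, ← mul_assoc, ← pow_succ, ← mul_assoc]
          _ = (∑ i : Fin n, p i.castSucc ^ ((j : ℕ) + 1) * α i.castSucc)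
                - (∑ i : Fin n, p i.castSucc ^ (j : ℕ) * α i.castSucc) * d := by
              rw [Finset.sum_sub_distrib, Finset.sum_mul]
          _ = -(L ^ ((j : ℕ) + 1) * c) - (-(L ^ (j : ℕ) * c)) * d := by rw [A0, A1]
          _ = 0 := by
              have hcc : c * d = L * c := by
                rw [hddef, ← mul_assoc, ← mul_assoc, mul_inv_cancel₀ hc, one_mul]
              rw [neg_mul, sub_neg_eq_add, mul_assoc, hcc, ← mul_assoc, ← pow_succ,
                neg_add_cancel]
      have hβ0 := IH (fun i => p i.castSucc) hq hnsq
        (fun i => p i.castSucc * α i.castSucc - α i.castSucc * d) hβrel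
      have key : ∀ i : Fin n, α i.castSucc ≠ 0 →
          ∃ h : ℍ[ℝ], h ≠ 0 ∧ p i.castSucc = h⁻¹ * L * h := by
        intro i hi
        have hb : p i.castSucc * α i.castSucc = α i.castSucc * d := by
          have h := congrFun hβ0 i
          simpa [sub_eq_zero] using h
        refine ⟨c * (α i.castSucc)⁻¹, mul_ne_zero hc (inv_ne_zero hi), ?_⟩
        have e1 : (c * (α i.castSucc)⁻¹)⁻¹ * L * (c * (α i.castSucc)⁻¹)
            = (α i.castSucc * d) * (α i.castSucc)⁻¹ := by
          rw [mul_inv_rev, inv_inv, hddef]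
          noncomm_ring
        rw [e1, ← hb, mul_assoc, mul_inv_cancel₀ hi, mul_one]
      by_cases h2 : ∃ i₁ i₂ : Fin n, i₁ ≠ i₂ ∧ α i₁.castSucc ≠ 0 ∧ α i₂.castSucc ≠ 0
      · obtain ⟨i1, i2, hne, hv1, hv2⟩ := h2
        exact hns ⟨Fin.last n, i1.castSucc, i2.castSucc,
          (Fin.castSucc_lt_last i1).ne',
          fun h => hne (Fin.castSucc_injective n h),
          (Fin.castSucc_lt_last i2).ne',
          key i1 hv1, key i2 hv2⟩
      · by_cases h1 : ∃ i : Fin n, α i.castSucc ≠ 0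
        · obtain ⟨i0, hi0⟩ := h1
          have hall : ∀ i : Fin n, i ≠ i0 → α i.castSucc = 0 := by
            intro i hi
            by_contra hv
            exact h2 ⟨i, i0, hi, hv, hi0⟩
          have s0 : ∑ i : Fin n, p i.castSucc ^ 0 * α i.castSucc = α i0.castSucc := by
            rw [Finset.sum_eq_single i0]
            · simp
            · intro b _ hb; simp [hall b hb]
            · intro hmem; exact absurd (Finset.mem_univ i0) hmem
          have s1 : ∑ i : Fin n, p i.castSucc ^ 1 * α i.castSucc
              = p i0.castSucc * α i0.castSucc := by
            rw [Finset.sum_eq_single i0]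
            · simp
            · intro b _ hb; simp [hall b hb]
            · intro hmem; exact absurd (Finset.mem_univ i0) hmem
          have T0 := T 0 (Nat.zero_le n)
          rw [s0] at T0
          have T1 := T 1 i0.pos
          rw [s1] at T1
          simp only [pow_zero, pow_one, one_mul] at T0 T1
          have hc2 : c = -α i0.castSucc := eq_neg_of_add_eq_zero_right T0
          rw [hc2] at T1
          have hz : (p i0.castSucc - L) * α i0.castSucc = 0 := by
            rw [sub_mul, sub_eq_add_neg, ← mul_neg]
            exact T1
          rcases mul_eq_zero.mp hz with h | h
          · exact (Fin.castSucc_lt_last i0).ne (hinj (sub_eq_zero.mp h))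
          · exact hi0 h
        · push_neg at h1
          have T0 := T 0 (Nat.zero_le n)
          simp [h1] at T0
          exact hc T0

theorem vandermonde_right_independent_iff (n : ℕ) (p : Fin n → ℍ[ℝ])
    (hdist : Function.Injective p) :
    (∀ α : Fin n → ℍ[ℝ],
        (∀ j : Fin n, ∑ i : Fin n, p i ^ (j : ℕ) * α i = 0) → α = 0)
      ↔ ¬ ∃ i j k : Fin n, i ≠ j ∧ j ≠ k ∧ i ≠ k ∧
          (∃ h : ℍ[ℝ], h ≠ 0 ∧ p j = h⁻¹ * p i * h) ∧
          (∃ h : ℍ[ℝ], h ≠ 0 ∧ p k = h⁻¹ * p i * h) := by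
  constructor
  · intro hind
    rintro ⟨i, j, k, hij, hjk, hik, ⟨g, hg, hpj⟩, ⟨f, hf, hpk⟩⟩
    have hjkne : p j - p k ≠ 0 := sub_ne_zero.mpr fun h => hjk (hdist h)
    have hre_j : (p j).re = (p i).re := by rw [hpj]; exact quat_conj_re hg
    have hns_j : normSq (p j) = normSq (p i) := by rw [hpj]; exact quat_conj_normSq hg
    have hre_k : (p k).re = (p i).re := by rw [hpk]; exact quat_conj_re hf
    have hns_k : normSq (p k) = normSq (p i) := by rw [hpk]; exact quat_conj_normSq hf
    have chi : p i * p i = ((2 * (p i).re : ℝ) : ℍ[ℝ]) * p i - ((normSq (p i) : ℝ) : ℍ[ℝ]) :=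
      quat_char (p i)
    have chj : p j * p j = ((2 * (p i).re : ℝ) : ℍ[ℝ]) * p j - ((normSq (p i) : ℝ) : ℍ[ℝ]) := by
      have h := quat_char (p j)
      rwa [hre_j, hns_j] at h
    have chk : p k * p k = ((2 * (p i).re : ℝ) : ℍ[ℝ]) * p k - ((normSq (p i) : ℝ) : ℍ[ℝ]) := by
      have h := quat_char (p k)
      rwa [hre_k, hns_k] at h
    set B : ℍ[ℝ] := -((p j - p k)⁻¹ * (p i - p k)) with hB
    set C : ℍ[ℝ] := -(1 + B) with hC
    have h0 : p i ^ 0 * 1 + p j ^ 0 * B + p k ^ 0 * C = 0 := by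
      simp only [pow_zero, one_mul, mul_one]
      rw [hC]; abel
    have h1 : p i ^ 1 * 1 + p j ^ 1 * B + p k ^ 1 * C = 0 := by
      have hBk : (p j - p k) * B = -(p i - p k) := by
        rw [hB, mul_neg, ← mul_assoc, mul_inv_cancel₀ hjkne, one_mul]
      have expand : p i ^ 1 * 1 + p j ^ 1 * B + p k ^ 1 * C
          = (p i - p k) + (p j - p k) * B := by rw [hC]; noncomm_ring
      rw [expand, hBk, add_neg_cancel]
    have hstep : ∀ m, p i ^ (m + 2) * 1 + p j ^ (m + 2) * B + p k ^ (m + 2) * C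
        = ((2 * (p i).re : ℝ) : ℍ[ℝ]) * (p i ^ (m + 1) * 1 + p j ^ (m + 1) * B + p k ^ (m + 1) * C)
          - ((normSq (p i) : ℝ) : ℍ[ℝ]) * (p i ^ m * 1 + p j ^ m * B + p k ^ m * C) := by
      intro m
      rw [quat_pow_step (p i) _ _ chi m, quat_pow_step (p j) _ _ chj m,
        quat_pow_step (p k) _ _ chk m]
      noncomm_ring
    have hS := two_step (2 * (p i).re) (normSq (p i))
      (fun m => p i ^ m * 1 + p j ^ m * B + p k ^ m * C) h0 h1 hstep
    set α : Fin n → ℍ[ℝ] := fun m =>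
      (if m = i then 1 else 0) + (if m = j then B else 0) + (if m = k then C else 0) with hαdef
    have hrel : ∀ e : Fin n, ∑ m : Fin n, p m ^ (e : ℕ) * α m = 0 := by
      intro e
      have hsum : ∑ m : Fin n, p m ^ (e : ℕ) * α m
          = p i ^ (e : ℕ) * 1 + p j ^ (e : ℕ) * B + p k ^ (e : ℕ) * C := by
        simp [hαdef, mul_add, mul_ite, Finset.sum_add_distrib, Finset.sum_ite_eq',
          mul_zero, mul_one]
      rw [hsum]
      exact hS (e : ℕ)
    have hz := congrFun (hind α hrel) i
    simp [hαdef, hij, hik] at hz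
  · intro hns
    exact indep_aux n p hdist hns
end

section
/- For quaternions p₁, ..., pₙ with |pᵢ| < 1 and arbitrary quaternions s₁, ..., sₙ, the series Pᵢⱼ = Σ_{k=0}^{∞} pᵢᵏ (1 - sᵢ conj(sⱼ)) conj(pⱼ)ᵏ converges absolutely for each i, j, and its diagonal entries satisfy Pᵢᵢ = (1 - |sᵢ|²)/(1 - |pᵢ|²). -/
open Quaternion

theorem pick_matrix_entries (n : ℕ) (p s : Fin n → ℍ[ℝ])
    (hp : ∀ i, ‖p i‖ < 1) :
    (∀ i j : Fin n,
        Summable fun k : ℕ => ‖p i ^ k * (1 - s i * star (s j)) * star (p j) ^ k‖) ∧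
      ∀ i : Fin n,
        HasSum (fun k : ℕ => p i ^ k * (1 - s i * star (s i)) * star (p i) ^ k)
          (((1 - ‖s i‖ ^ 2) / (1 - ‖p i‖ ^ 2) : ℝ) : ℍ[ℝ]) := by
  constructor
  · intro i j
    have hr : ‖p i‖ * ‖p j‖ < 1 := by
      nlinarith [norm_nonneg (p i), norm_nonneg (p j), hp i, hp j]
    have hr0 : 0 ≤ ‖p i‖ * ‖p j‖ := mul_nonneg (norm_nonneg _) (norm_nonneg _)
    have heq : (fun k : ℕ => ‖p i ^ k * (1 - s i * star (s j)) * star (p j) ^ k‖)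
        = fun k : ℕ => ‖1 - s i * star (s j)‖ * (‖p i‖ * ‖p j‖) ^ k := by
      funext k
      rw [norm_mul, norm_mul, norm_pow, norm_pow, norm_star, mul_pow]
      ring_nf
    rw [heq]
    exact (summable_geometric_of_lt_one hr0 hr).mul_left _
  · intro i
    have hc : (1 - s i * star (s i)) = (((1 - ‖s i‖ ^ 2 : ℝ)) : ℍ[ℝ]) := by
      rw [Quaternion.self_mul_star]
      rw [Quaternion.normSq_eq_norm_mul_self]
      norm_cast
      ring_nf
    have hterm : ∀ k : ℕ, p i ^ k * (1 - s i * star (s i)) * star (p i) ^ k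
        = (((1 - ‖s i‖ ^ 2) * (‖p i‖ ^ 2) ^ k : ℝ) : ℍ[ℝ]) := by
      intro k
      rw [hc, ← star_pow]
      have hcomm := (Quaternion.coe_commute ((1 - ‖s i‖ ^ 2 : ℝ)) (p i ^ k)).eq
      rw [← hcomm, mul_assoc, Quaternion.self_mul_star, Quaternion.normSq_eq_norm_mul_self]
      norm_cast
      rw [norm_pow]
      ring_nf
    have h2 : ‖p i‖ ^ 2 < 1 := by nlinarith [norm_nonneg (p i), hp i]
    have h20 : 0 ≤ ‖p i‖ ^ 2 := sq_nonneg _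
    have hgeo : HasSum (fun k : ℕ => (1 - ‖s i‖ ^ 2) * (‖p i‖ ^ 2) ^ k)
        ((1 - ‖s i‖ ^ 2) / (1 - ‖p i‖ ^ 2)) := by
      have := (hasSum_geometric_of_lt_one h20 h2).mul_left (1 - ‖s i‖ ^ 2)
      simpa [div_eq_mul_inv] using this
    have := hgeo.map (algebraMap ℝ ℍ[ℝ]) (continuous_algebraMap _ _)
    simp only [Quaternion.algebraMap_def, Function.comp] at this
    simp only [hterm]
    exact this
end

section
/- Let T be the n×n diagonal quaternionic matrix with entries p₁,...,pₙ (|pᵢ| < 1), E the column of ones, N the column with entries s₁,...,sₙ, and P the n×n quaternionic matrix with Pᵢⱼ = Σₖ pᵢᵏ (1 - sᵢ conj(sⱼ)) conj(pⱼ)ᵏ. Then P satisfies the Stein equation P - T P T* = E E* - N N*. -/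
open Quaternion Matrix

theorem pick_matrix_stein_equation (n : ℕ) (p s : Fin n → ℍ[ℝ])
    (hp : ∀ i, ‖p i‖ < 1)
    (T : Matrix (Fin n) (Fin n) ℍ[ℝ]) (hT : T = Matrix.diagonal p)
    (E N : Matrix (Fin n) (Fin 1) ℍ[ℝ])
    (hE : E = fun _ _ => 1) (hN : N = fun i _ => s i)
    (P : Matrix (Fin n) (Fin n) ℍ[ℝ])
    (hP : ∀ i j : Fin n,
      HasSum (fun k : ℕ => p i ^ k * (1 - s i * star (s j)) * star (p j) ^ k) (P i j)) :
    P - T * P * Tᴴ = E * Eᴴ - N * Nᴴ := by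
  subst hT hE hN
  refine Matrix.ext fun i j => ?_
  set A := 1 - s i * star (s j) with hA
  set f : ℕ → ℍ[ℝ] := fun k => p i ^ k * A * star (p j) ^ k with hf
  have h := hP i j
  have h1 : HasSum (fun k : ℕ => p i * f k * star (p j))
      (p i * P i j * star (p j)) := (h.mul_left _).mul_right _
  have hfun : (fun k : ℕ => p i * f k * star (p j)) = fun k => f (k + 1) := by
    funext k
    simp only [hf]
    rw [pow_succ', pow_succ]
    simp only [mul_assoc]
  have h2 : HasSum (fun k : ℕ => f (k + 1)) (P i j - f 0) := by
    refine (hasSum_nat_add_iff (f := f) 1).2 ?_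
    simpa using h
  rw [hfun] at h1
  have key : p i * P i j * star (p j) = P i j - f 0 := h1.unique h2
  have hf0 : f 0 = A := by simp [hf]
  have hTP : (diagonal p * P * (diagonal p)ᴴ) i j = p i * P i j * star (p j) := by
    rw [diagonal_conjTranspose]
    rw [Matrix.mul_apply]
    simp [Matrix.mul_apply, diagonal, mul_assoc]
  simp only [Matrix.sub_apply, hTP, key, hf0]
  simp [Matrix.mul_apply, conjTranspose_apply, hA]
  erw [Matrix.mul_apply, Matrix.mul_apply]
  show 1 - s i * star (s j) = ∑ _k : Fin 1, (1 : ℍ[ℝ]) * star (1 : ℍ[ℝ]) - ∑ _k : Fin 1, s i * star (s j)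
  simp
end

section
/- In the quaternionic Hardy space H²(B) with reproducing kernel k(p,q) = Σₙ pⁿ conj(q)ⁿ, a finite collection {k(·,qᵢ)}_{i=1}^{m} based on distinct points q₁,...,q_m ∈ B is right-linearly independent over ℍ if and only if no three of the points q₁,...,q_m lie on the same 2-sphere (conjugacy class). -/
open Quaternion Polynomial

lemma quat_char_s13 (s : ℍ[ℝ]) : s*s - 2*((s.re:ℝ):ℍ[ℝ])*s + ((normSq s : ℝ):ℍ[ℝ]) = 0 := by
  have h2 : (2 : ℍ[ℝ]) = ((2:ℝ):ℍ[ℝ]) := by norm_cast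
  rw [h2, Quaternion.normSq_def']
  push_cast [← Quaternion.coe_pow]
  ext <;> simp [← Quaternion.coe_pow] <;> ring

lemma root_class (s r : ℍ[ℝ]) (h : r*r - 2*((s.re:ℝ):ℍ[ℝ])*r + ((normSq s : ℝ):ℍ[ℝ]) = 0) :
    r.re = s.re ∧ normSq r = normSq s := by
  have h2 : (2 : ℍ[ℝ]) = ((2:ℝ):ℍ[ℝ]) := by norm_cast
  rw [h2] at h
  have hre := congrArg QuaternionAlgebra.re h
  have hi := congrArg QuaternionAlgebra.imI h
  have hj := congrArg QuaternionAlgebra.imJ h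
  have hk := congrArg QuaternionAlgebra.imK h
  simp [Quaternion.re_mul, Quaternion.imI_mul, Quaternion.imJ_mul, Quaternion.imK_mul] at hre hi hj hk
  rw [Quaternion.normSq_def'] at hre
  rw [Quaternion.normSq_def', Quaternion.normSq_def' s]
  by_cases hc : r.re = s.re
  · refine ⟨hc, ?_⟩
    rw [hc] at hre hi hj hk ⊢
    nlinarith [hre]
  · exfalso
    have hI : r.imI = 0 := by
      have : 2 * r.re * r.imI - 2 * s.re * r.imI = 0 := by linarith [hi]
      have h3 : (r.re - s.re) * r.imI = 0 := by linarith
      rcases mul_eq_zero.1 h3 with h4 | h4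
      · exact absurd (by linarith) hc
      · exact h4
    have hJ : r.imJ = 0 := by
      have h3 : (r.re - s.re) * r.imJ = 0 := by linarith [hj]
      rcases mul_eq_zero.1 h3 with h4 | h4
      · exact absurd (by linarith) hc
      · exact h4
    have hK : r.imK = 0 := by
      have h3 : (r.re - s.re) * r.imK = 0 := by linarith [hk]
      rcases mul_eq_zero.1 h3 with h4 | h4
      · exact absurd (by linarith) hc
      · exact h4
    rw [hI, hJ, hK] at hre
    have : (r.re - s.re)^2 + (s.imI ^ 2 + s.imJ ^ 2 + s.imK ^ 2) = 0 := by nlinarith [hre]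
    have h5 : r.re - s.re = 0 := by nlinarith [sq_nonneg (r.re - s.re), sq_nonneg s.imI, sq_nonneg s.imJ, sq_nonneg s.imK]
    exact hc (by linarith)

noncomputable def chi (s : ℍ[ℝ]) : Polynomial ℝ := X^2 - C (2*s.re) * X + C (normSq s)

lemma aeval_chi (s r : ℍ[ℝ]) : aeval r (chi s) = r*r - 2*((s.re:ℝ):ℍ[ℝ])*r + ((normSq s : ℝ):ℍ[ℝ]) := by
  have h2 : (2 : ℍ[ℝ]) = ((2:ℝ):ℍ[ℝ]) := by norm_cast
  simp [chi, sq, h2]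

lemma aeval_chi_self (s : ℍ[ℝ]) : aeval s (chi s) = 0 := by
  rw [aeval_chi]; exact quat_char_s13 s

lemma aeval_chi_ne_zero (s r : ℍ[ℝ]) (h : ¬(r.re = s.re ∧ normSq r = normSq s)) :
    aeval r (chi s) ≠ 0 := by
  intro h0
  rw [aeval_chi] at h0
  exact h (root_class s r h0)

lemma summable_pq (p s : ℍ[ℝ]) (hp : ‖p‖ < 1) (hs : ‖s‖ < 1) :
    Summable (fun n : ℕ => p^n * s^n) := by
  apply Summable.of_norm
  have : ∀ n : ℕ, ‖p^n * s^n‖ = (‖p‖*‖s‖)^n := by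
    intro n; rw [norm_mul, norm_pow, norm_pow, mul_pow]
  rw [funext this]
  exact summable_geometric_of_lt_one (by positivity) (by nlinarith [norm_nonneg p, norm_nonneg s])

-- coefficient extraction
lemma coeff_zero (β : ℕ → ℍ[ℝ]) (C : ℝ) (hC0 : 0 ≤ C) (hC : ∀ n, ‖β n‖ ≤ C)
    (h : ∀ t : ℝ, 0 < t → t ≤ 1/2 → ∑' n : ℕ, ((t:ℍ[ℝ]))^n * β n = 0) :
    ∀ n, β n = 0 := by
  intro N
  induction N using Nat.strong_induction_on with
  | _ N ih =>
  -- show ∀ t small, ‖β N‖ ≤ 2*C*t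
  have key : ∀ t : ℝ, 0 < t → t ≤ 1/2 → ‖β N‖ ≤ 2*C*t := by
    intro t ht ht2
    have htn : ∀ n : ℕ, ‖((t:ℍ[ℝ]))^n * β n‖ ≤ C * t^n := by
      intro n
      rw [norm_mul, norm_pow, Quaternion.norm_coe, Real.norm_eq_abs, abs_of_pos ht]
      calc t^n * ‖β n‖ ≤ t^n * C := by
              apply mul_le_mul_of_nonneg_left (hC n) (by positivity)
        _ = C * t^n := by ring
    have hsum : Summable (fun n : ℕ => ((t:ℍ[ℝ]))^n * β n) := by
      apply Summable.of_norm
      apply Summable.of_nonneg_of_le (fun n => norm_nonneg _) htn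
      exact (summable_geometric_of_lt_one (le_of_lt ht) (by linarith)).mul_left C
    have hsplit := Summable.sum_add_tsum_nat_add (f := fun n : ℕ => ((t:ℍ[ℝ]))^n * β n) (N+1) hsum
    rw [h t ht ht2] at hsplit
    have hfin : ∑ i ∈ Finset.range (N+1), ((t:ℍ[ℝ]))^i * β i = ((t:ℍ[ℝ]))^N * β N := by
      rw [Finset.sum_range_succ]
      have : ∀ i ∈ Finset.range N, ((t:ℍ[ℝ]))^i * β i = 0 := by
        intro i hi
        rw [ih i (Finset.mem_range.1 hi), mul_zero]
      rw [Finset.sum_eq_zero this, zero_add]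
    rw [hfin] at hsplit
    -- ‖t^N β N‖ = ‖∑' tail‖ ≤ C t^{N+1} * 2
    have htail : ‖∑' i : ℕ, ((t:ℍ[ℝ]))^(i+(N+1)) * β (i+(N+1))‖ ≤ C * t^(N+1) * 2 := by
      have hb : ∀ i : ℕ, ‖((t:ℍ[ℝ]))^(i+(N+1)) * β (i+(N+1))‖ ≤ (C * t^(N+1)) * t^i := by
        intro i
        calc ‖((t:ℍ[ℝ]))^(i+(N+1)) * β (i+(N+1))‖ ≤ C * t^(i+(N+1)) := htn _
          _ = (C * t^(N+1)) * t^i := by rw [pow_add]; ring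
      have hsg : Summable (fun i : ℕ => (C * t^(N+1)) * t^i) :=
        (summable_geometric_of_lt_one (le_of_lt ht) (by linarith)).mul_left _
      calc ‖∑' i : ℕ, ((t:ℍ[ℝ]))^(i+(N+1)) * β (i+(N+1))‖
          ≤ ∑' i : ℕ, (C * t^(N+1)) * t^i := by
            apply tsum_of_norm_bounded (hsg.hasSum) hb
        _ = (C * t^(N+1)) * (1-t)⁻¹ := by rw [tsum_mul_left, tsum_geometric_of_lt_one (le_of_lt ht) (by linarith)]
        _ ≤ C * t^(N+1) * 2 := by
            apply mul_le_mul_of_nonneg_left _ (by positivity)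
            rw [inv_le_iff_one_le_mul₀ (by linarith)]
            linarith
    have heq : ((t:ℍ[ℝ]))^N * β N = - ∑' i : ℕ, ((t:ℍ[ℝ]))^(i+(N+1)) * β (i+(N+1)) :=
      eq_neg_of_add_eq_zero_left hsplit
    have hnorm : t^N * ‖β N‖ ≤ C * t^(N+1) * 2 := by
      have := congrArg norm heq
      rw [norm_neg, norm_mul, norm_pow, Quaternion.norm_coe, Real.norm_eq_abs, abs_of_pos ht] at this
      rw [this]; exact htail
    have htN : 0 < t^N := by positivity
    rw [pow_succ] at hnorm
    calc ‖β N‖ = (t^N * ‖β N‖) / t^N := by field_simp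
      _ ≤ (C * (t^N * t) * 2) / t^N := by gcongr
      _ = 2*C*t := by field_simp
  by_contra hne
  have hpos : 0 < ‖β N‖ := norm_pos_iff.2 hne
  set t := min (1/2) (‖β N‖ / (4*C+1)) with ht_def
  have ht : 0 < t := lt_min (by norm_num) (by positivity)
  have ht2 : t ≤ 1/2 := min_le_left _ _
  have hk := key t ht ht2
  have h3 : t ≤ ‖β N‖ / (4*C+1) := min_le_right _ _
  have h4 : t * (4*C+1) ≤ ‖β N‖ := by
    rw [← le_div_iff₀ (by positivity)]; exact h3
  nlinarith

lemma alg_core (m : ℕ) (s : Fin m → ℍ[ℝ]) (hinj : Function.Injective s)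
    (hno3 : ∀ i j k : Fin m, i ≠ j → j ≠ k → i ≠ k →
      ¬(((s i).re = (s j).re ∧ normSq (s i) = normSq (s j)) ∧
        ((s i).re = (s k).re ∧ normSq (s i) = normSq (s k))))
    (α : Fin m → ℍ[ℝ]) (hβ : ∀ n : ℕ, ∑ i : Fin m, (s i)^n * α i = 0) :
    ∀ i, α i = 0 := by
  classical
  have hpoly : ∀ P : Polynomial ℝ, ∑ i : Fin m, aeval (s i) P * α i = 0 := by
    intro P
    have hlt : P.natDegree < P.natDegree + 1 := Nat.lt_succ_self _
    calc ∑ i : Fin m, aeval (s i) P * α i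
        = ∑ i : Fin m, ∑ n ∈ Finset.range (P.natDegree+1), P.coeff n • ((s i)^n * α i) := by
          apply Finset.sum_congr rfl
          intro i _
          rw [Polynomial.aeval_eq_sum_range' hlt, Finset.sum_mul]
          exact Finset.sum_congr rfl (fun n _ => smul_mul_assoc _ _ _)
      _ = ∑ n ∈ Finset.range (P.natDegree+1), P.coeff n • (∑ i : Fin m, (s i)^n * α i) := by
          rw [Finset.sum_comm]
          exact Finset.sum_congr rfl (fun n _ => (Finset.smul_sum).symm)
      _ = 0 := by
          apply Finset.sum_eq_zero
          intro n _
          rw [hβ n, smul_zero]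
  intro i₀
  set cls : Fin m → Prop := fun j => (s j).re = (s i₀).re ∧ normSq (s j) = normSq (s i₀) with hcls
  set G : Finset (Fin m) := Finset.univ.filter (fun j => ¬ cls j) with hG
  set Q : Polynomial ℝ := ∏ j ∈ G, chi (s j) with hQdef
  have hQout : ∀ j ∈ G, aeval (s j) Q = 0 := by
    intro j hj
    rw [hQdef, ← Finset.mul_prod_erase G _ hj, map_mul, aeval_chi_self, zero_mul]
  have hQin : ∀ j : Fin m, cls j → aeval (s j) Q ≠ 0 := by
    intro j hj
    have hgen : ∀ F : Finset (Fin m), (∀ j' ∈ F, ¬ cls j') →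
        aeval (s j) (∏ j' ∈ F, chi (s j')) ≠ 0 := by
      intro F
      induction F using Finset.induction_on with
      | empty => intro _; simp
      | insert _ _ hnotmem ih =>
        rename_i a F'
        intro hF
        rw [Finset.prod_insert hnotmem, map_mul]
        apply mul_ne_zero
        · apply aeval_chi_ne_zero
          intro hcl
          exact hF a (Finset.mem_insert_self a F') ⟨hcl.1 ▸ hj.1, hcl.2 ▸ hj.2⟩
        · exact ih (fun j' hj' => hF j' (Finset.mem_insert_of_mem hj'))
    rw [hQdef]
    apply hgen
    intro j' hj'
    simp only [hG, Finset.mem_filter] at hj'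
    exact hj'.2
  set S : Finset (Fin m) := Finset.univ.filter cls with hS
  have hi₀S : i₀ ∈ S := by simp [hS, hcls]
  have hsplit : ∀ P : Polynomial ℝ, ∑ j ∈ S, aeval (s j) P * aeval (s j) Q * α j = 0 := by
    intro P
    have h0 := hpoly (P * Q)
    rw [← Finset.sum_filter_add_sum_filter_not Finset.univ cls] at h0
    have hz : ∑ j ∈ Finset.univ.filter (fun j => ¬ cls j), aeval (s j) (P*Q) * α j = 0 := by
      apply Finset.sum_eq_zero
      intro j hj
      rw [map_mul, hQout j (hG ▸ hj), mul_zero, zero_mul]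
    rw [hz, add_zero] at h0
    rw [← h0]
    exact Finset.sum_congr rfl (fun j _ => by rw [map_mul])
  by_cases hex : ∃ j₁ ∈ S, j₁ ≠ i₀
  · obtain ⟨j₁, hj₁S, hj₁ne⟩ := hex
    have hclsj₁ : cls j₁ := by simpa [hS] using hj₁S
    have hSeq : S = {i₀, j₁} := by
      ext j
      simp only [Finset.mem_insert, Finset.mem_singleton]
      constructor
      · intro hjS
        by_contra hcon
        push_neg at hcon
        have hclsj : cls j := by simpa [hS] using hjS
        exact hno3 i₀ j j₁ (Ne.symm hcon.1) hcon.2 hj₁ne.symm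
          ⟨⟨hclsj.1.symm, hclsj.2.symm⟩, ⟨hclsj₁.1.symm, hclsj₁.2.symm⟩⟩
      · rintro (rfl | rfl)
        · exact hi₀S
        · exact hj₁S
    have hsum2 : ∀ f : Fin m → ℍ[ℝ], ∑ j ∈ S, f j = f i₀ + f j₁ := by
      intro f
      rw [hSeq, Finset.sum_insert (by simpa using hj₁ne.symm), Finset.sum_singleton]
    have e1 := hsplit 1
    rw [hsum2] at e1
    simp only [map_one, one_mul] at e1
    have e2 := hsplit X
    rw [hsum2] at e2
    simp only [Polynomial.aeval_X] at e2
    set A := aeval (s i₀) Q with hA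
    set B := aeval (s j₁) Q with hB
    have hAne : A ≠ 0 := hQin i₀ (by simp [hcls])
    have hBne : B ≠ 0 := hQin j₁ hclsj₁
    have e1' : A * α i₀ = -(B * α j₁) := by linear_combination (norm := noncomm_ring) e1
    have e3 : (s j₁ - s i₀) * (B * α j₁) = 0 := by
      have : s i₀ * (A * α i₀) + s j₁ * (B * α j₁) = 0 := by
        rw [← e2]; noncomm_ring
      rw [e1'] at this
      linear_combination (norm := noncomm_ring) this
    have hsne : s j₁ - s i₀ ≠ 0 := sub_ne_zero.2 (fun h => hj₁ne (hinj h))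
    have hBα : B * α j₁ = 0 := by
      rcases mul_eq_zero.1 e3 with h | h
      · exact absurd h hsne
      · exact h
    have hαj₁ : α j₁ = 0 := by
      rcases mul_eq_zero.1 hBα with h | h
      · exact absurd h hBne
      · exact h
    rw [hαj₁, mul_zero, neg_zero] at e1'
    rcases mul_eq_zero.1 e1' with h | h
    · exact absurd h hAne
    · exact h
  · push_neg at hex
    have e1 := hsplit 1
    rw [Finset.sum_eq_single i₀ (fun j hj hne => absurd (hex j hj) (by simpa using hne))
      (fun h => absurd hi₀S h)] at e1
    simp only [map_one, one_mul] at e1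
    have hAne : aeval (s i₀) Q ≠ 0 := hQin i₀ (by simp [hcls])
    rcases mul_eq_zero.1 e1 with h | h
    · exact absurd h hAne
    · exact h

lemma real_smul_coe (r c : ℝ) : r • ((c:ℝ):ℍ[ℝ]) = ((r*c : ℝ):ℍ[ℝ]) := by
  ext <;> simp

lemma pure_im_sq (x : ℍ[ℝ]) (h : x.re = 0) : x * x = -((normSq x : ℝ):ℍ[ℝ]) := by
  rw [Quaternion.normSq_def']
  ext <;> simp [h, ← Quaternion.coe_pow] <;> ring

lemma star_eq_re_sub_im (x : ℍ[ℝ]) : star x = ((x.re:ℝ):ℍ[ℝ]) - x.im := by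
  ext <;> simp

lemma star_pow_eq (x : ℍ[ℝ]) (b : ℝ) (hb : b ≠ 0) (him : ‖x.im‖ = b) (n : ℕ) :
    (star x)^n = (((((x.re : ℂ) - (b:ℂ)*Complex.I)^n).re : ℝ) : ℍ[ℝ])
      + ((((x.re:ℂ) - (b:ℂ)*Complex.I)^n).im) • (b⁻¹ • x.im) := by
  set u : ℍ[ℝ] := b⁻¹ • x.im with hu_def
  have hnsq : normSq x.im = b * b := by
    rw [Quaternion.normSq_eq_norm_mul_self, him]
  have hu : u * u = -1 := by
    rw [hu_def, smul_mul_assoc, mul_smul_comm, smul_smul,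
      pure_im_sq x.im (Quaternion.re_im x), hnsq]
    rw [smul_neg, neg_eq_iff_eq_neg, neg_neg, real_smul_coe]
    norm_cast
    field_simp
    simp
  set φ : ℂ →ₐ[ℝ] ℍ[ℝ] := Complex.liftAux u hu with hφ
  have hφz : φ ((x.re : ℂ) - (b:ℂ)*Complex.I) = star x := by
    rw [hφ, Complex.liftAux_apply]
    simp only [Complex.sub_re, Complex.ofReal_re, Complex.mul_re, Complex.ofReal_im,
      Complex.I_re, Complex.I_im, Complex.sub_im, Complex.mul_im]
    rw [star_eq_re_sub_im]
    have : b • u = x.im := by rw [hu_def, smul_smul, mul_inv_cancel₀ hb, one_smul]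
    simp only [mul_zero, zero_mul, sub_zero, mul_one, zero_sub, zero_add, add_zero]
    rw [neg_smul, this]
    rfl
  rw [← hφz, ← map_pow, hφ, Complex.liftAux_apply]
  rfl

lemma norm_im_eq_of (x y : ℍ[ℝ]) (hre : x.re = y.re) (hns : normSq x = normSq y) :
    ‖x.im‖ = ‖y.im‖ := by
  have h1 : ∀ z : ℍ[ℝ], ‖z.im‖^2 = normSq z - z.re^2 := by
    intro z
    rw [sq, ← Quaternion.normSq_eq_norm_mul_self,
      Quaternion.normSq_def' z.im, Quaternion.normSq_def' z]
    simp
    ring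
  have h2 : ‖x.im‖^2 = ‖y.im‖^2 := by rw [h1, h1, hre, hns]
  have h3 := congrArg Real.sqrt h2
  rwa [Real.sqrt_sq (norm_nonneg _), Real.sqrt_sq (norm_nonneg _)] at h3

theorem kernel_functions_right_independent_iff (m : ℕ) (q : Fin m → ℍ[ℝ])
    (hq : ∀ i, ‖q i‖ < 1) (hdist : Function.Injective q) :
    (∀ α : Fin m → ℍ[ℝ],
        (∀ p : ℍ[ℝ], ‖p‖ < 1 →
          ∑ i : Fin m, (∑' n : ℕ, p ^ n * (star (q i)) ^ n) * α i = 0) → α = 0)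
      ↔ ¬ ∃ i j k : Fin m, i ≠ j ∧ j ≠ k ∧ i ≠ k ∧
          ((q i).re = (q j).re ∧ ‖(q i).im‖ = ‖(q j).im‖) ∧
          ((q i).re = (q k).re ∧ ‖(q i).im‖ = ‖(q k).im‖) := by
  classical
  constructor
  · -- independence → no three on a sphere
    intro hind
    rintro ⟨i, j, k, hij, hjk, hik, ⟨hre1, him1⟩, ⟨hre2, him2⟩⟩
    have hb : ‖(q i).im‖ ≠ 0 := by
      intro hb0
      have h1 : (q i).im = 0 := norm_eq_zero.1 hb0
      have h2 : (q j).im = 0 := norm_eq_zero.1 (him1 ▸ hb0)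
      have : q i = q j := by
        rw [← Quaternion.re_add_im (q i), ← Quaternion.re_add_im (q j), h1, h2, hre1]
      exact hij (hdist this)
    set a : ℝ := (q i).re with ha
    set b : ℝ := ‖(q i).im‖ with hbdef
    set u : Fin m → ℍ[ℝ] := fun l => b⁻¹ • (q l).im with hu
    have him_eq : ∀ l, (q l).im = b • u l := by
      intro l
      rw [hu]
      simp only [smul_smul, mul_inv_cancel₀ hb, one_smul]
    have huik : u i ≠ u k := by
      intro he
      apply hik
      apply hdist
      rw [← Quaternion.re_add_im (q i), ← Quaternion.re_add_im (q k), ← ha, ← hre2,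
        him_eq i, him_eq k, he]
    set z : ℂ := (a:ℂ) - (b:ℂ)*Complex.I with hz
    have hsp : ∀ l, (q l).re = a → ‖(q l).im‖ = b → ∀ n : ℕ,
        (star (q l))^n = ((((z^n).re : ℝ)) : ℍ[ℝ]) + ((z^n).im) • u l := by
      intro l h1 h2 n
      have h3 := star_pow_eq (q l) b hb h2 n
      rw [h1] at h3
      exact h3
    set αi : ℍ[ℝ] := (u i - u k)⁻¹ * (u k - u j) with hαi
    set α : Fin m → ℍ[ℝ] :=
      fun l => if l = i then αi else if l = j then 1 else if l = k then -αi - 1 else 0 with hα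
    have hαi_val : α i = αi := by simp [hα]
    have hαj_val : α j = 1 := by simp [hα, Ne.symm hij]
    have hαk_val : α k = -αi - 1 := by simp [hα, Ne.symm hik, Ne.symm hjk]
    have hlin : (u i - u k) * αi = u k - u j := by
      rw [hαi, ← mul_assoc, mul_inv_cancel₀ (sub_ne_zero.2 huik), one_mul]
    have key : ∀ n : ℕ,
        (star (q i))^n * α i + (star (q j))^n * α j + (star (q k))^n * α k = 0 := by
      intro n
      rw [hαi_val, hαj_val, hαk_val,
        hsp i rfl rfl n, hsp j hre1.symm him1.symm n, hsp k hre2.symm him2.symm n]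
      set c : ℝ := (z^n).re
      set d : ℝ := (z^n).im
      have hd : ∀ x : ℍ[ℝ], d • x = ((d:ℝ):ℍ[ℝ]) * x := fun x =>
        (Quaternion.coe_mul_eq_smul d x).symm
      rw [hd, hd, hd]
      have e : (((c:ℝ):ℍ[ℝ]) + ((d:ℝ):ℍ[ℝ]) * u i) * αi + (((c:ℝ):ℍ[ℝ]) + ((d:ℝ):ℍ[ℝ]) * u j) * 1
            + (((c:ℝ):ℍ[ℝ]) + ((d:ℝ):ℍ[ℝ]) * u k) * (-αi - 1)
          = ((d:ℝ):ℍ[ℝ]) * ((u i - u k) * αi) + ((d:ℝ):ℍ[ℝ]) * (u j - u k) := by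
        noncomm_ring
      rw [e, hlin]
      noncomm_ring
    have hsum0 : ∀ p : ℍ[ℝ], ‖p‖ < 1 →
        ∑ l : Fin m, (∑' n : ℕ, p ^ n * (star (q l)) ^ n) * α l = 0 := by
      intro p hp
      have hzero : ∀ l ∈ Finset.univ, l ∉ ({i, j, k} : Finset (Fin m)) →
          (∑' n : ℕ, p ^ n * (star (q l)) ^ n) * α l = 0 := by
        intro l _ hl
        simp only [Finset.mem_insert, Finset.mem_singleton] at hl
        push_neg at hl
        have : α l = 0 := by simp [hα, hl.1, hl.2.1, hl.2.2]
        rw [this, mul_zero]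
      rw [← Finset.sum_subset (Finset.subset_univ ({i, j, k} : Finset (Fin m))) hzero]
      rw [Finset.sum_insert (by simp [hij, hik]), Finset.sum_insert (by simp [hjk]),
        Finset.sum_singleton]
      have hsml : ∀ l : Fin m, Summable (fun n : ℕ => p ^ n * (star (q l)) ^ n * α l) := by
        intro l
        have hl1 : ‖star (q l)‖ < 1 := by rw [Quaternion.norm_star]; exact hq l
        exact (summable_pq p _ hp hl1).mul_right _
      rw [← tsum_mul_right, ← tsum_mul_right, ← tsum_mul_right,
        ← Summable.tsum_add (hsml j) (hsml k), ← Summable.tsum_add (hsml i) ((hsml j).add (hsml k))]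
      have hn : ∀ n : ℕ, p ^ n * (star (q i)) ^ n * α i + (p ^ n * (star (q j)) ^ n * α j
          + p ^ n * (star (q k)) ^ n * α k) = 0 := by
        intro n
        have e2 : p ^ n * (star (q i)) ^ n * α i + (p ^ n * (star (q j)) ^ n * α j
              + p ^ n * (star (q k)) ^ n * α k)
            = p ^ n * ((star (q i))^n * α i + (star (q j))^n * α j + (star (q k))^n * α k) := by
          noncomm_ring
        rw [e2, key n, mul_zero]
      rw [funext hn, tsum_zero]
    have hres := hind α hsum0
    have : α j = 0 := by rw [hres]; rfl
    rw [hαj_val] at this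
    exact one_ne_zero this
  · -- no three on a sphere → independence
    intro hno3 α hα
    funext i₀
    show α i₀ = 0
    have hβ : ∀ n : ℕ, ∑ l : Fin m, (star (q l)) ^ n * α l = 0 := by
      apply coeff_zero _ (∑ l : Fin m, ‖α l‖)
      · exact Finset.sum_nonneg (fun l _ => norm_nonneg _)
      · intro n
        calc ‖∑ l : Fin m, (star (q l)) ^ n * α l‖
            ≤ ∑ l : Fin m, ‖(star (q l)) ^ n * α l‖ := norm_sum_le _ _
          _ ≤ ∑ l : Fin m, ‖α l‖ := by
              apply Finset.sum_le_sum
              intro l _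
              rw [norm_mul, norm_pow]
              have h1 : ‖star (q l)‖ ≤ 1 := by rw [Quaternion.norm_star]; exact le_of_lt (hq l)
              calc ‖star (q l)‖ ^ n * ‖α l‖ ≤ 1 ^ n * ‖α l‖ := by
                    apply mul_le_mul_of_nonneg_right _ (norm_nonneg _)
                    exact pow_le_pow_left₀ (norm_nonneg _) h1 n
                _ = ‖α l‖ := by rw [one_pow, one_mul]
      · intro t ht ht2
        have hpt : ‖((t : ℝ) : ℍ[ℝ])‖ < 1 := by
          rw [Quaternion.norm_coe, Real.norm_eq_abs, abs_of_pos ht]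
          linarith
        have h0 := hα ((t : ℝ) : ℍ[ℝ]) hpt
        have h1 : ∀ l ∈ Finset.univ,
            (∑' n : ℕ, ((t:ℍ[ℝ])) ^ n * (star (q l)) ^ n) * α l
              = ∑' n : ℕ, ((t:ℍ[ℝ])) ^ n * (star (q l)) ^ n * α l :=
          fun l _ => (tsum_mul_right).symm
        rw [Finset.sum_congr rfl h1] at h0
        have hsml : ∀ l ∈ Finset.univ,
            Summable (fun n : ℕ => ((t:ℍ[ℝ])) ^ n * (star (q l)) ^ n * α l) := by
          intro l _
          have hl1 : ‖star (q l)‖ < 1 := by rw [Quaternion.norm_star]; exact hq l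
          exact (summable_pq _ _ hpt hl1).mul_right _
        rw [← Summable.tsum_finsetSum hsml] at h0
        have h2 : ∀ n : ℕ, (∑ l : Fin m, ((t:ℍ[ℝ])) ^ n * (star (q l)) ^ n * α l)
            = ((t:ℍ[ℝ])) ^ n * ∑ l : Fin m, (star (q l)) ^ n * α l := by
          intro n
          rw [Finset.mul_sum]
          exact Finset.sum_congr rfl (fun l _ => mul_assoc _ _ _)
        rw [tsum_congr h2] at h0
        exact h0
    have hno3' : ∀ i j k : Fin m, i ≠ j → j ≠ k → i ≠ k →
        ¬(((star (q i)).re = (star (q j)).re ∧ normSq (star (q i)) = normSq (star (q j))) ∧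
          ((star (q i)).re = (star (q k)).re ∧ normSq (star (q i)) = normSq (star (q k)))) := by
      rintro i j k hij hjk hik ⟨⟨h1, h2⟩, ⟨h3, h4⟩⟩
      apply hno3
      rw [Quaternion.re_star, Quaternion.re_star] at h1 h3
      rw [Quaternion.normSq_star, Quaternion.normSq_star] at h2 h4
      exact ⟨i, j, k, hij, hjk, hik, ⟨h1, norm_im_eq_of _ _ h1 h2⟩,
        ⟨h3, norm_im_eq_of _ _ h3 h4⟩⟩
    have hsinj : Function.Injective (fun l => star (q l)) := by
      intro x y hxy
      apply hdist
      have := congrArg star hxy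
      simpa using this
    exact alg_core m (fun l => star (q l)) hsinj hno3' α hβ i₀
end

section
/- Let S(p) = Σₖ pᵏ Sₖ be a quaternionic power series on the unit ball and let Sₙ be the (n+1)×(n+1) lower-triangular Toeplitz matrix with (i,j) entry S_{i-j} for i ≥ j and 0 otherwise. Then the left ⋆-multiplication operator M_S : f ↦ S ⋆ f is a contraction on the quaternionic Hardy space H²(B) if and only if Iₙ - Sₙ Sₙ* is positive semidefinite for every n ≥ 0. -/
open Quaternion Matrix

section Aux

variable {m : ℕ}

private lemma qsum (x : Fin m → ℍ[ℝ]) :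
    ∑ i, star (x i) * x i = ((∑ i, ‖x i‖ ^ 2 : ℝ) : ℍ[ℝ]) := by
  rw [← Quaternion.algebraMap_def, map_sum]
  refine Finset.sum_congr rfl fun i _ => ?_
  rw [Quaternion.algebraMap_def, Quaternion.star_mul_self]
  congr 1
  rw [Quaternion.normSq_eq_norm_mul_self, sq]

private lemma adj_eq (A : Matrix (Fin m) (Fin m) ℍ[ℝ]) (v x : Fin m → ℍ[ℝ]) :
    ∑ k, star ((Aᴴ.mulVec v) k) * x k = ∑ j, star (v j) * (A.mulVec x) j := by
  simp only [Matrix.mulVec, dotProduct, Matrix.conjTranspose_apply, star_sum, StarMul.star_mul,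
    star_star, Finset.sum_mul, Finset.mul_sum]
  rw [Finset.sum_comm]
  simp [mul_assoc]

private lemma cs (x y : Fin m → ℍ[ℝ]) :
    ‖∑ i, star (x i) * y i‖ ≤
      Real.sqrt (∑ i, ‖x i‖ ^ 2) * Real.sqrt (∑ i, ‖y i‖ ^ 2) := by
  calc ‖∑ i, star (x i) * y i‖ ≤ ∑ i, ‖x i‖ * ‖y i‖ := by
        refine (norm_sum_le _ _).trans (Finset.sum_le_sum fun i _ => ?_)
        rw [norm_mul, norm_star]
    _ ≤ Real.sqrt (∑ i, ‖x i‖ ^ 2) * Real.sqrt (∑ i, ‖y i‖ ^ 2) := by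
        rw [← Real.sqrt_mul (by positivity)]
        refine (Real.le_sqrt (by positivity) (by positivity)).mpr ?_
        exact Finset.sum_mul_sq_le_sq_mul_sq _ _ _

private lemma adj_contraction {A : Matrix (Fin m) (Fin m) ℍ[ℝ]}
    (h : ∀ x : Fin m → ℍ[ℝ], ∑ i, ‖A.mulVec x i‖ ^ 2 ≤ ∑ i, ‖x i‖ ^ 2)
    (v : Fin m → ℍ[ℝ]) : ∑ i, ‖Aᴴ.mulVec v i‖ ^ 2 ≤ ∑ i, ‖v i‖ ^ 2 := by
  set w := Aᴴ.mulVec v with hw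
  set a := ∑ i, ‖w i‖ ^ 2 with ha
  set b := ∑ i, ‖v i‖ ^ 2 with hb
  have ha0 : 0 ≤ a := Finset.sum_nonneg fun i _ => by positivity
  have hb0 : 0 ≤ b := Finset.sum_nonneg fun i _ => by positivity
  have key : a ≤ Real.sqrt b * Real.sqrt a := by
    have h1 : ((a : ℝ) : ℍ[ℝ]) = ∑ j, star (v j) * (A.mulVec w) j := by
      rw [← qsum, adj_eq]
    have h2 : a = ‖∑ j, star (v j) * (A.mulVec w) j‖ := by
      rw [← h1, Quaternion.norm_coe, Real.norm_eq_abs, abs_of_nonneg ha0]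
    calc a = ‖∑ j, star (v j) * (A.mulVec w) j‖ := h2
      _ ≤ Real.sqrt b * Real.sqrt (∑ i, ‖A.mulVec w i‖ ^ 2) := cs v (A.mulVec w)
      _ ≤ Real.sqrt b * Real.sqrt a :=
          mul_le_mul_of_nonneg_left (Real.sqrt_le_sqrt (h w)) (Real.sqrt_nonneg _)
  nlinarith [Real.sq_sqrt ha0, Real.sq_sqrt hb0, Real.sqrt_nonneg a, Real.sqrt_nonneg b,
    mul_self_nonneg (Real.sqrt a - Real.sqrt b)]

private lemma qf_eq (A : Matrix (Fin m) (Fin m) ℍ[ℝ]) (v : Fin m → ℍ[ℝ]) :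
    ∑ i, ∑ j, star (v i) * (((1 : Matrix (Fin m) (Fin m) ℍ[ℝ]) - A * Aᴴ) i j) * v j
      = (((∑ i, ‖v i‖ ^ 2) - ∑ i, ‖Aᴴ.mulVec v i‖ ^ 2 : ℝ) : ℍ[ℝ]) := by
  set w := Aᴴ.mulVec v with hw
  have h1 : ∑ i, ∑ j, star (v i) * ((1 : Matrix (Fin m) (Fin m) ℍ[ℝ]) i j) * v j
      = ∑ i, star (v i) * v i := by
    refine Finset.sum_congr rfl fun i _ => ?_
    rw [Finset.sum_eq_single i]
    · simp [Matrix.one_apply]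
    · intro j _ hj; simp [Matrix.one_apply, (Ne.symm hj)]
    · simp
  have h2 : ∑ i, ∑ j, star (v i) * ((A * Aᴴ) i j) * v j = ∑ k, star (w k) * w k := by
    have expand : ∀ i j : Fin m, star (v i) * ((A * Aᴴ) i j) * v j
        = ∑ k, (star (v i) * A i k) * (star (A j k) * v j) := by
      intro i j
      simp only [Matrix.mul_apply, Matrix.conjTranspose_apply, Finset.mul_sum, Finset.sum_mul]
      refine Finset.sum_congr rfl fun k _ => ?_
      simp [mul_assoc]
    calc ∑ i, ∑ j, star (v i) * ((A * Aᴴ) i j) * v j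
        = ∑ i, ∑ k, ∑ j, (star (v i) * A i k) * (star (A j k) * v j) := by
          refine Finset.sum_congr rfl fun i _ => ?_
          simp only [expand]
          exact Finset.sum_comm
      _ = ∑ k, ∑ i, ∑ j, (star (v i) * A i k) * (star (A j k) * v j) := Finset.sum_comm
      _ = ∑ k, star (w k) * w k := by
          refine Finset.sum_congr rfl fun k _ => ?_
          rw [← Finset.sum_mul_sum]
          congr 1
          · rw [hw]
            simp only [Matrix.mulVec, dotProduct, Matrix.conjTranspose_apply, star_sum,
              StarMul.star_mul, star_star]
  simp only [Matrix.sub_apply, mul_sub, sub_mul, Finset.sum_sub_distrib]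
  rw [h1, h2, qsum, qsum]
  push_cast
  ring_nf

private lemma mulVec_conv (S f : ℕ → ℍ[ℝ]) (n : ℕ) (i : Fin (n + 1)) :
    (Matrix.of fun i j : Fin (n + 1) =>
        if (j : ℕ) ≤ (i : ℕ) then S ((i : ℕ) - (j : ℕ)) else 0).mulVec
      (fun j => f (j : ℕ)) i
    = ∑ r ∈ Finset.range ((i : ℕ) + 1), S r * f ((i : ℕ) - r) := by
  have hi := i.isLt
  calc (Matrix.of fun i j : Fin (n + 1) =>
        if (j : ℕ) ≤ (i : ℕ) then S ((i : ℕ) - (j : ℕ)) else 0).mulVec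
          (fun j => f (j : ℕ)) i
      = ∑ j : Fin (n + 1), if (j : ℕ) ≤ (i : ℕ) then S ((i : ℕ) - (j : ℕ)) * f (j : ℕ) else 0 := by
        simp [Matrix.mulVec, dotProduct, ite_mul]
    _ = ∑ j ∈ Finset.range (n + 1), if j ≤ (i : ℕ) then S ((i : ℕ) - j) * f j else 0 :=
        Fin.sum_univ_eq_sum_range (fun j => if j ≤ (i : ℕ) then S ((i : ℕ) - j) * f j else 0) (n + 1)
    _ = ∑ j ∈ (Finset.range (n + 1)).filter (fun j => j ≤ (i : ℕ)), S ((i : ℕ) - j) * f j :=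
        (Finset.sum_filter _ _).symm
    _ = ∑ j ∈ Finset.range ((i : ℕ) + 1), S ((i : ℕ) - j) * f j := by
        congr 1
        ext j
        simp only [Finset.mem_filter, Finset.mem_range]
        omega
    _ = ∑ r ∈ Finset.range ((i : ℕ) + 1), S r * f ((i : ℕ) - r) := by
        rw [← Finset.sum_range_reflect (fun r => S r * f ((i : ℕ) - r)) ((i : ℕ) + 1)]
        refine Finset.sum_congr rfl fun j hj => ?_
        rw [Finset.mem_range] at hj
        have h1 : (i : ℕ) + 1 - 1 - j = (i : ℕ) - j := by omega
        rw [h1, Nat.sub_sub_self (by omega : j ≤ (i : ℕ))]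

end Aux

theorem multiplier_contraction_iff_toeplitz (S : ℕ → ℍ[ℝ]) :
    (∀ f : ℕ → ℍ[ℝ], (Summable fun k => ‖f k‖ ^ 2) →
        (Summable fun k => ‖∑ r ∈ Finset.range (k + 1), S r * f (k - r)‖ ^ 2) ∧
        (∑' k : ℕ, ‖∑ r ∈ Finset.range (k + 1), S r * f (k - r)‖ ^ 2)
          ≤ ∑' k : ℕ, ‖f k‖ ^ 2)
      ↔ ∀ n : ℕ, ∀ v : Fin (n + 1) → ℍ[ℝ], ∃ t : ℝ, 0 ≤ t ∧
          ∑ i, ∑ j, star (v i) *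
            (((1 : Matrix (Fin (n + 1)) (Fin (n + 1)) ℍ[ℝ])
              - (Matrix.of fun i j : Fin (n + 1) =>
                  if (j : ℕ) ≤ (i : ℕ) then S ((i : ℕ) - (j : ℕ)) else 0)
                * (Matrix.of fun i j : Fin (n + 1) =>
                  if (j : ℕ) ≤ (i : ℕ) then S ((i : ℕ) - (j : ℕ)) else 0)ᴴ) i j)
            * v j = (t : ℍ[ℝ]) := by
  set T : ∀ n : ℕ, Matrix (Fin (n + 1)) (Fin (n + 1)) ℍ[ℝ] := fun n =>
    Matrix.of fun i j : Fin (n + 1) =>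
      if (j : ℕ) ≤ (i : ℕ) then S ((i : ℕ) - (j : ℕ)) else 0 with hT
  constructor
  · intro h n v
    -- the multiplier truncated to degree n is a contraction
    have hcon : ∀ x : Fin (n + 1) → ℍ[ℝ],
        ∑ i, ‖(T n).mulVec x i‖ ^ 2 ≤ ∑ i, ‖x i‖ ^ 2 := by
      intro x
      set f : ℕ → ℍ[ℝ] := fun k => if hk : k < n + 1 then x ⟨k, hk⟩ else 0 with hf
      have hfx : ∀ j : Fin (n + 1), f (j : ℕ) = x j := fun j => by
        simp [hf, j.isLt]
        intro h; omega
      have hf0 : ∀ k ∉ Finset.range (n + 1), ‖f k‖ ^ 2 = 0 := by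
        intro k hk
        rw [Finset.mem_range] at hk
        simp [hf, hk]
        intro h; omega
      have hfs : Summable fun k => ‖f k‖ ^ 2 :=
        summable_of_ne_finset_zero (s := Finset.range (n + 1)) hf0
      obtain ⟨hg, hle⟩ := h f hfs
      have htf : ∑' k, ‖f k‖ ^ 2 = ∑ i : Fin (n + 1), ‖x i‖ ^ 2 := by
        rw [tsum_eq_sum hf0, ← Fin.sum_univ_eq_sum_range (fun k => ‖f k‖ ^ 2) (n + 1)]
        exact Finset.sum_congr rfl fun i _ => by rw [hfx]
      have hxf : (fun j : Fin (n + 1) => f (j : ℕ)) = x := funext hfx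
      calc ∑ i, ‖(T n).mulVec x i‖ ^ 2
          = ∑ i : Fin (n + 1), ‖∑ r ∈ Finset.range ((i : ℕ) + 1), S r * f ((i : ℕ) - r)‖ ^ 2 := by
            rw [← hxf]
            exact Finset.sum_congr rfl fun i _ => by rw [hT, mulVec_conv]
        _ = ∑ k ∈ Finset.range (n + 1), ‖∑ r ∈ Finset.range (k + 1), S r * f (k - r)‖ ^ 2 :=
            Fin.sum_univ_eq_sum_range
              (fun k => ‖∑ r ∈ Finset.range (k + 1), S r * f (k - r)‖ ^ 2) (n + 1)
        _ ≤ ∑' k, ‖∑ r ∈ Finset.range (k + 1), S r * f (k - r)‖ ^ 2 :=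
            Summable.sum_le_tsum _ (fun k _ => by positivity) hg
        _ ≤ ∑' k, ‖f k‖ ^ 2 := hle
        _ = ∑ i : Fin (n + 1), ‖x i‖ ^ 2 := htf
    refine ⟨(∑ i, ‖v i‖ ^ 2) - ∑ i, ‖(T n)ᴴ.mulVec v i‖ ^ 2,
      sub_nonneg.mpr (adj_contraction hcon v), qf_eq (T n) v⟩
  · intro h f hf
    have hcon : ∀ n (x : Fin (n + 1) → ℍ[ℝ]),
        ∑ i, ‖(T n).mulVec x i‖ ^ 2 ≤ ∑ i, ‖x i‖ ^ 2 := by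
      intro n x
      have hAdj : ∀ v : Fin (n + 1) → ℍ[ℝ],
          ∑ i, ‖(T n)ᴴ.mulVec v i‖ ^ 2 ≤ ∑ i, ‖v i‖ ^ 2 := by
        intro v
        obtain ⟨t, ht0, hteq⟩ := h n v
        rw [show (Matrix.of fun i j : Fin (n + 1) =>
            if (j : ℕ) ≤ (i : ℕ) then S ((i : ℕ) - (j : ℕ)) else 0) = T n from rfl,
          qf_eq] at hteq
        have := Quaternion.coe_injective hteq
        linarith
      have := adj_contraction hAdj x
      rwa [Matrix.conjTranspose_conjTranspose] at this
    set g : ℕ → ℝ := fun k => ‖∑ r ∈ Finset.range (k + 1), S r * f (k - r)‖ ^ 2 with hgdef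
    have hgnn : ∀ k, 0 ≤ g k := fun k => by positivity
    have hbound : ∀ N, ∑ k ∈ Finset.range N, g k ≤ ∑' k, ‖f k‖ ^ 2 := by
      intro N
      cases N with
      | zero =>
        simp only [Finset.range_zero, Finset.sum_empty]
        exact tsum_nonneg fun k => by positivity
      | succ n =>
        have e1 : ∑ k ∈ Finset.range (n + 1), g k
            = ∑ i : Fin (n + 1), ‖(T n).mulVec (fun j => f (j : ℕ)) i‖ ^ 2 := by
          rw [← Fin.sum_univ_eq_sum_range g (n + 1)]
          exact Finset.sum_congr rfl fun i _ => by rw [hT, mulVec_conv]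
        rw [e1]
        refine (hcon n _).trans ?_
        calc ∑ i : Fin (n + 1), ‖f (i : ℕ)‖ ^ 2
            = ∑ k ∈ Finset.range (n + 1), ‖f k‖ ^ 2 :=
              Fin.sum_univ_eq_sum_range (fun k => ‖f k‖ ^ 2) (n + 1)
          _ ≤ ∑' k, ‖f k‖ ^ 2 := Summable.sum_le_tsum _ (fun k _ => by positivity) hf
    have hsum : Summable g := summable_of_sum_range_le hgnn hbound
    exact ⟨hsum, Summable.tsum_le_of_sum_range_le hsum hbound⟩
end

section
/- If S(p) = Σₖ pᵏ Sₖ is a quaternionic power series such that the Toeplitz contractivity condition holds (Iₙ - Sₙ Sₙ* ≥ 0 for all n, where Sₙ is the lower triangular Toeplitz matrix of the coefficients), then |S₀| ≤ 1 and |Sₖ| ≤ 1 for every k; moreover the series converges on the unit ball and |S(p)| ≤ 1 for all |p| < 1. -/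
open Quaternion Matrix Filter

lemma qcoe_sum {α : Type*} (s : Finset α) (f : α → ℝ) :
    ((∑ i ∈ s, f i : ℝ) : ℍ[ℝ]) = ∑ i ∈ s, ((f i : ℝ) : ℍ[ℝ]) := by
  induction s using Finset.cons_induction with
  | empty => simp
  | cons a s h ih => rw [Finset.sum_cons, Finset.sum_cons, Quaternion.coe_add, ih]

lemma qnorm_sq (x : ℍ[ℝ]) : x * star x = ((‖x‖ ^ 2 : ℝ) : ℍ[ℝ]) := by
  rw [Quaternion.self_mul_star, Quaternion.normSq_eq_norm_mul_self, sq]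

lemma key {n : ℕ} (T : Matrix (Fin (n + 1)) (Fin (n + 1)) ℍ[ℝ]) (v : Fin (n + 1) → ℍ[ℝ]) :
    ∑ i, ∑ j, star (v i) * (((1 : Matrix (Fin (n + 1)) (Fin (n + 1)) ℍ[ℝ]) - T * Tᴴ) i j) * v j
      = (((∑ i, ‖v i‖ ^ 2) - ∑ l, ‖∑ i, star (v i) * T i l‖ ^ 2 : ℝ) : ℍ[ℝ]) := by
  have h1 : ∀ i j : Fin (n + 1),
      star (v i) * (((1 : Matrix (Fin (n + 1)) (Fin (n + 1)) ℍ[ℝ]) - T * Tᴴ) i j) * v j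
        = star (v i) * ((1 : Matrix (Fin (n + 1)) (Fin (n + 1)) ℍ[ℝ]) i j) * v j
          - ∑ l, (star (v i) * T i l) * (star (T j l) * v j) := by
    intro i j
    simp only [Matrix.sub_apply, Matrix.mul_apply, Matrix.conjTranspose_apply, sub_mul, mul_sub,
      Finset.mul_sum, Finset.sum_mul, mul_assoc]
  have hstar : ∀ l : Fin (n + 1),
      star (∑ i, star (v i) * T i l) = ∑ j, star (T j l) * v j := by
    intro l
    rw [star_sum]
    exact Finset.sum_congr rfl fun j _ => by rw [StarMul.star_mul, star_star]
  have h2 : ∀ l : Fin (n + 1), ((‖∑ i, star (v i) * T i l‖ ^ 2 : ℝ) : ℍ[ℝ])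
      = ∑ i, ∑ j, (star (v i) * T i l) * (star (T j l) * v j) := by
    intro l
    rw [← qnorm_sq, hstar l, Finset.sum_mul]
    exact Finset.sum_congr rfl fun i _ => Finset.mul_sum _ _ _
  rw [Quaternion.coe_sub, qcoe_sum, qcoe_sum]
  simp only [h1, Finset.sum_sub_distrib]
  congr 1
  · refine Finset.sum_congr rfl fun i _ => ?_
    rw [Finset.sum_eq_single i]
    · rw [Matrix.one_apply_eq, mul_one, Quaternion.star_mul_self,
        Quaternion.normSq_eq_norm_mul_self, sq]
    · intro b _ hb
      rw [Matrix.one_apply_ne (Ne.symm hb), mul_zero, zero_mul]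
    · simp
  · rw [Finset.sum_congr rfl fun l _ => h2 l]
    exact (Finset.sum_congr rfl fun i _ => Finset.sum_comm).trans Finset.sum_comm

theorem toeplitz_contractive_implies_bounded (S : ℕ → ℍ[ℝ])
    (hT : ∀ n : ℕ, ∀ v : Fin (n + 1) → ℍ[ℝ], ∃ t : ℝ, 0 ≤ t ∧
      ∑ i, ∑ j, star (v i) *
        (((1 : Matrix (Fin (n + 1)) (Fin (n + 1)) ℍ[ℝ])
          - (Matrix.of fun i j : Fin (n + 1) =>
              if (j : ℕ) ≤ (i : ℕ) then S ((i : ℕ) - (j : ℕ)) else 0)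
            * (Matrix.of fun i j : Fin (n + 1) =>
              if (j : ℕ) ≤ (i : ℕ) then S ((i : ℕ) - (j : ℕ)) else 0)ᴴ) i j)
        * v j = (t : ℍ[ℝ])) :
    (∀ k : ℕ, ‖S k‖ ≤ 1) ∧
      ∀ p : ℍ[ℝ], ‖p‖ < 1 →
        (Summable fun k : ℕ => ‖p ^ k * S k‖) ∧ ‖∑' k : ℕ, p ^ k * S k‖ ≤ 1 := by
  have hineq : ∀ n : ℕ, ∀ v : Fin (n + 1) → ℍ[ℝ],
      ∑ l, ‖∑ i, star (v i) * (Matrix.of fun i j : Fin (n + 1) =>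
        if (j : ℕ) ≤ (i : ℕ) then S ((i : ℕ) - (j : ℕ)) else 0) i l‖ ^ 2
        ≤ ∑ i, ‖v i‖ ^ 2 := by
    intro n v
    obtain ⟨t, ht, h⟩ := hT n v
    rw [key] at h
    have h' := Quaternion.coe_injective h
    linarith
  have h1 : ∀ k : ℕ, ‖S k‖ ≤ 1 := by
    intro k
    have h := hineq k (fun i => if i = Fin.last k then 1 else 0)
    have hrhs : ∑ i : Fin (k + 1), ‖if i = Fin.last k then (1 : ℍ[ℝ]) else 0‖ ^ 2 = 1 := by
      simp [apply_ite (‖·‖), Finset.sum_ite_eq']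
    have hc : ∀ l : Fin (k + 1),
        (∑ i : Fin (k + 1), star (if i = Fin.last k then (1 : ℍ[ℝ]) else 0) *
          (Matrix.of fun i j : Fin (k + 1) =>
            if (j : ℕ) ≤ (i : ℕ) then S ((i : ℕ) - (j : ℕ)) else 0) i l) = S (k - (l : ℕ)) := by
      intro l
      rw [Finset.sum_eq_single (Fin.last k)]
      · simp [Matrix.of_apply, Fin.is_le l]
        intro hlt
        exact absurd hlt (not_lt.2 (Fin.le_last l))
      · intro b _ hb
        rw [if_neg hb]
        simp
      · simp
    rw [hrhs, Finset.sum_congr rfl fun l _ => by rw [hc l]] at h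
    have hterm : ‖S k‖ ^ 2 ≤ ∑ l : Fin (k + 1), ‖S (k - (l : ℕ))‖ ^ 2 := by
      have := Finset.single_le_sum (f := fun l : Fin (k + 1) => ‖S (k - (l : ℕ))‖ ^ 2)
        (fun l _ => by positivity) (Finset.mem_univ (0 : Fin (k + 1)))
      simpa using this
    nlinarith [norm_nonneg (S k)]
  refine ⟨h1, fun p hp => ?_⟩
  have hq0 : (0 : ℝ) ≤ ‖p‖ ^ 2 := by positivity
  have hq1 : ‖p‖ ^ 2 < 1 := by nlinarith [norm_nonneg p]
  have hsum : Summable fun k : ℕ => ‖p ^ k * S k‖ := by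
    refine Summable.of_nonneg_of_le (fun _ => norm_nonneg _) (fun k => ?_)
      (summable_geometric_of_lt_one (norm_nonneg p) hp)
    rw [norm_mul, norm_pow]
    exact mul_le_of_le_one_right (pow_nonneg (norm_nonneg p) k) (h1 k)
  refine ⟨hsum, ?_⟩
  have hg : Summable fun k : ℕ => p ^ k * S k := Summable.of_norm hsum
  set f : ℍ[ℝ] := ∑' k : ℕ, p ^ k * S k with hf
  have hF : Tendsto (fun N => ∑ m ∈ Finset.range N, p ^ m * S m) atTop (nhds f) :=
    hg.hasSum.tendsto_sum_nat
  have hkey : ∀ n : ℕ,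
      ∑ l ∈ Finset.range (n + 1), (‖p‖ ^ 2) ^ l *
        ‖∑ m ∈ Finset.range (n + 1 - l), p ^ m * S m‖ ^ 2
        ≤ ∑ i ∈ Finset.range (n + 1), (‖p‖ ^ 2) ^ i := by
    intro n
    have h := hineq n (fun i => (star p) ^ (i : ℕ))
    have hc : ∀ l : Fin (n + 1),
        (∑ i : Fin (n + 1), star ((star p) ^ (i : ℕ)) *
          (Matrix.of fun i j : Fin (n + 1) =>
            if (j : ℕ) ≤ (i : ℕ) then S ((i : ℕ) - (j : ℕ)) else 0) i l)
          = p ^ (l : ℕ) * ∑ m ∈ Finset.range (n + 1 - (l : ℕ)), p ^ m * S m := by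
      intro l
      have e1 : ∀ i : Fin (n + 1), star ((star p) ^ (i : ℕ)) *
          (Matrix.of fun i j : Fin (n + 1) =>
            if (j : ℕ) ≤ (i : ℕ) then S ((i : ℕ) - (j : ℕ)) else 0) i l
          = p ^ (i : ℕ) * (if (l : ℕ) ≤ (i : ℕ) then S ((i : ℕ) - (l : ℕ)) else 0) := by
        intro i
        simp [Matrix.of_apply, star_pow]
      rw [Finset.sum_congr rfl fun i _ => e1 i]
      rw [Fin.sum_univ_eq_sum_range (fun i => p ^ i * (if (l : ℕ) ≤ i then S (i - (l : ℕ)) else 0))]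
      have hsub : Finset.Ico (l : ℕ) (n + 1) ⊆ Finset.range (n + 1) :=
        fun x hx => Finset.mem_range.2 (Finset.mem_Ico.1 hx).2
      have hz : ∀ x ∈ Finset.range (n + 1), x ∉ Finset.Ico (l : ℕ) (n + 1) →
          p ^ x * (if (l : ℕ) ≤ x then S (x - (l : ℕ)) else 0) = 0 := by
        intro x hx hx'
        rw [Finset.mem_range] at hx
        rw [Finset.mem_Ico, not_and_or] at hx'
        have hnl : ¬ (l : ℕ) ≤ x := by
          rcases hx' with h' | h'
          · exact h'
          · exact absurd hx h'
        rw [if_neg hnl, mul_zero]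
      rw [← Finset.sum_subset hsub hz, Finset.sum_Ico_eq_sum_range, Finset.mul_sum]
      refine Finset.sum_congr rfl fun i _ => ?_
      rw [if_pos (Nat.le_add_right _ _), Nat.add_sub_cancel_left, pow_add, mul_assoc]
    refine le_trans (le_of_eq ?_) (le_trans h (le_of_eq ?_))
    · rw [← Fin.sum_univ_eq_sum_range
        (fun l => (‖p‖ ^ 2) ^ l * ‖∑ m ∈ Finset.range (n + 1 - l), p ^ m * S m‖ ^ 2)]
      refine Finset.sum_congr rfl fun l _ => ?_
      rw [hc l, norm_mul, norm_pow, mul_pow, pow_right_comm]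
    · rw [Fin.sum_univ_eq_sum_range (fun i => ‖(star p) ^ i‖ ^ 2)]
      refine Finset.sum_congr rfl fun i _ => ?_
      rw [norm_pow, Quaternion.norm_star, pow_right_comm]
  have hgeo : ∀ n : ℕ, ∑ i ∈ Finset.range n, (‖p‖ ^ 2) ^ i ≤ (1 - ‖p‖ ^ 2)⁻¹ := by
    intro n
    refine le_trans (Summable.sum_le_tsum (Finset.range n) (fun i _ => by positivity)
      (summable_geometric_of_lt_one hq0 hq1)) ?_
    rw [tsum_geometric_of_lt_one hq0 hq1]
  have hL : ∀ L : ℕ, (∑ l ∈ Finset.range (L + 1), (‖p‖ ^ 2) ^ l) * ‖f‖ ^ 2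
      ≤ (1 - ‖p‖ ^ 2)⁻¹ := by
    intro L
    have hmono : ∀ n ≥ L, ∑ l ∈ Finset.range (L + 1), (‖p‖ ^ 2) ^ l *
        ‖∑ m ∈ Finset.range (n + 1 - l), p ^ m * S m‖ ^ 2 ≤ (1 - ‖p‖ ^ 2)⁻¹ := by
      intro n hn
      refine le_trans (Finset.sum_le_sum_of_subset_of_nonneg
        (Finset.range_subset_range.2 (by omega)) (fun i _ _ => by positivity))
        ((hkey n).trans (hgeo (n + 1)))
    have htend : Tendsto (fun n => ∑ l ∈ Finset.range (L + 1), (‖p‖ ^ 2) ^ l *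
        ‖∑ m ∈ Finset.range (n + 1 - l), p ^ m * S m‖ ^ 2) atTop
        (nhds (∑ l ∈ Finset.range (L + 1), (‖p‖ ^ 2) ^ l * ‖f‖ ^ 2)) := by
      refine tendsto_finset_sum _ fun l _ => ?_
      exact Tendsto.const_mul _
        (((hF.comp ((tendsto_sub_atTop_nat l).comp (tendsto_add_atTop_nat 1))).norm).pow 2)
    have := le_of_tendsto htend (Filter.eventually_atTop.2 ⟨L, hmono⟩)
    rwa [← Finset.sum_mul] at this
  have htend2 : Tendsto (fun L : ℕ => (∑ l ∈ Finset.range (L + 1), (‖p‖ ^ 2) ^ l) * ‖f‖ ^ 2)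
      atTop (nhds ((1 - ‖p‖ ^ 2)⁻¹ * ‖f‖ ^ 2)) := by
    exact Tendsto.mul_const _
      ((hasSum_geometric_of_lt_one hq0 hq1).tendsto_sum_nat.comp (tendsto_add_atTop_nat 1))
  have hfin : (1 - ‖p‖ ^ 2)⁻¹ * ‖f‖ ^ 2 ≤ (1 - ‖p‖ ^ 2)⁻¹ :=
    le_of_tendsto htend2 (Filter.Eventually.of_forall hL)
  have hc0 : (0 : ℝ) < (1 - ‖p‖ ^ 2)⁻¹ := by
    rw [inv_pos]; linarith
  have h2 : ‖f‖ ^ 2 ≤ 1 := le_of_mul_le_mul_left (by rw [mul_one]; exact hfin) hc0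
  nlinarith [sq_nonneg (‖f‖ - 1), h2]
end

section
/- Let Θ be the 2×2 quaternionic-matrix-valued function Θ(p) = I₂ + (p-1) Σₖ pᵏ [E*; N*] T*ᵏ P⁻¹ (Iₙ - T)⁻¹ [E, -N], where T = diag(p₁,...,pₙ) with |pᵢ|<1 and pᵢ ≠ 1, E the column of ones, N the column of sᵢ, and P the positive definite solution of P - TPT* = EE* - NN*. Then with J = diag(1,-1), the kernel Σₖ pᵏ (J - Θ(p) J Θ(q)*) conj(q)ᵏ equals (Σₖ pᵏ [E*;N*] T*ᵏ) P⁻¹ (Σₖ Tᵏ [E, N] conj(q)ᵏ) for all p, q in the unit ball, and in particular is a positive kernel. -/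
open Quaternion Matrix Filter

private lemma aux_abstract {S : Type*} [Ring S] (G H J F b d X Y : S)
    (hB1 : G * J = b + F - b * Y) (hB2 : J * H = d + F - X * d)
    (hB3 : G * (J * H) = b + d + F) :
    J - (1 + (X - 1) * G) * J * (1 + H * (Y - 1)) = F - X * F * Y := by
  have e : (1 + (X - 1) * G) * J * (1 + H * (Y - 1))
      = J + (X - 1) * (G * J) + (J * H) * (Y - 1) + (X - 1) * (G * (J * H)) * (Y - 1) := by
    noncomm_ring
  rw [e, hB1, hB3, hB2]
  noncomm_ring

private lemma aux_telescope (x y : ℍ[ℝ]) (hx : ‖x‖ < 1) (hy : ‖y‖ < 1) (F a : ℍ[ℝ])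
    (ha : a = F - x * F * star y) :
    HasSum (fun k : ℕ => x ^ k * a * (star y) ^ k) F := by
  have hterm : ∀ k : ℕ, x ^ k * a * (star y) ^ k
      = x ^ k * F * (star y) ^ k - x ^ (k+1) * F * (star y) ^ (k+1) := by
    intro k
    rw [ha, pow_succ x k, pow_succ' (star y) k]
    noncomm_ring
  have hr1 : (0:ℝ) ≤ ‖x‖ * ‖y‖ := by positivity
  have hr2 : ‖x‖ * ‖y‖ < 1 := by nlinarith [norm_nonneg x, norm_nonneg y]
  have hnorm : ∀ k : ℕ, ‖x ^ k * a * (star y) ^ k‖ = ‖a‖ * (‖x‖ * ‖y‖) ^ k := by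
    intro k
    rw [norm_mul, norm_mul, norm_pow, norm_pow, norm_star, mul_pow]
    ring
  have hsum : Summable (fun k : ℕ => x ^ k * a * (star y) ^ k) := by
    apply Summable.of_norm
    have := (summable_geometric_of_lt_one hr1 hr2).mul_left ‖a‖
    exact this.congr fun k => (hnorm k).symm
  rw [hsum.hasSum_iff_tendsto_nat]
  have hps : ∀ n : ℕ, ∑ k ∈ Finset.range n, x ^ k * a * (star y) ^ k
      = F - x ^ n * F * (star y) ^ n := by
    intro n
    rw [Finset.sum_congr rfl fun k _ => hterm k,
      Finset.sum_range_sub' (fun k => x ^ k * F * (star y) ^ k) n]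
    simp
  simp only [hps]
  have h0 : Tendsto (fun n : ℕ => x ^ n * F * (star y) ^ n) atTop (nhds 0) := by
    apply squeeze_zero_norm (a := fun n => ‖F‖ * (‖x‖ * ‖y‖) ^ n)
    · intro n
      rw [norm_mul, norm_mul, norm_pow, norm_pow, norm_star, mul_pow]
      exact le_of_eq (by ring)
    · simpa using (tendsto_pow_atTop_nhds_zero_of_lt_one hr1 hr2).const_mul ‖F‖
  simpa using tendsto_const_nhds.sub h0

private lemma hsL {m μ : Type*} {κ : Type*} [Fintype κ] (x : ℍ[ℝ])
    (G : ℕ → Matrix m κ ℍ[ℝ]) (S : Matrix m κ ℍ[ℝ]) (B : Matrix κ μ ℍ[ℝ])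
    (h : ∀ i j, HasSum (fun k => x ^ k * G k i j) (S i j)) (i : m) (j : μ) :
    HasSum (fun k => x ^ k * (G k * B) i j) ((S * B) i j) := by
  have e : (fun k : ℕ => x ^ k * (G k * B) i j)
      = fun k => ∑ l, (x ^ k * G k i l) * B l j := by
    funext k
    simp [Matrix.mul_apply, Finset.mul_sum, mul_assoc]
  rw [e, Matrix.mul_apply]
  exact hasSum_sum fun l _ => (h i l).mul_right (B l j)

private lemma hsR {m μ : Type*} {κ : Type*} [Fintype κ] (y : ℍ[ℝ])
    (G : ℕ → Matrix κ m ℍ[ℝ]) (S : Matrix κ m ℍ[ℝ]) (B : Matrix μ κ ℍ[ℝ])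
    (h : ∀ i j, HasSum (fun k => G k i j * y ^ k) (S i j)) (i : μ) (j : m) :
    HasSum (fun k => (B * G k) i j * y ^ k) ((B * S) i j) := by
  have e : (fun k : ℕ => (B * G k) i j * y ^ k)
      = fun k => ∑ l, B i l * (G k l j * y ^ k) := by
    funext k
    simp [Matrix.mul_apply, Finset.sum_mul, mul_assoc]
  rw [e, Matrix.mul_apply]
  exact hasSum_sum fun l _ => (h l j).mul_left (B i l)

private lemma entryL {κ : Type*} (c : ℍ[ℝ]) (G : Matrix (Fin 2) κ ℍ[ℝ]) (i : Fin 2) (j : κ) :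
    ((c • (1 : Matrix (Fin 2) (Fin 2) ℍ[ℝ])) * G) i j = c * G i j := by
  rw [Matrix.smul_mul, Matrix.one_mul, Matrix.smul_apply, smul_eq_mul]

private lemma entryR {κ : Type*} [Fintype κ] [DecidableEq κ]
    (c : ℍ[ℝ]) (G : Matrix κ (Fin 2) ℍ[ℝ]) (i : κ) (j : Fin 2) :
    (G * (c • (1 : Matrix (Fin 2) (Fin 2) ℍ[ℝ]))) i j = G i j * c := by
  simp [Matrix.mul_apply, Matrix.one_apply, mul_ite, mul_zero, mul_one]

private lemma smul_one_ct (c : ℍ[ℝ]) :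
    (c • (1 : Matrix (Fin 2) (Fin 2) ℍ[ℝ]))ᴴ = star c • 1 := by
  refine Matrix.ext fun i j => ?_
  by_cases h : i = j <;>
    simp [Matrix.conjTranspose_apply, Matrix.one_apply, h, eq_comm]

private lemma sum_dotProduct' {ι κ : Type*} [Fintype κ] (s : Finset ι)
    (f : ι → κ → ℍ[ℝ]) (z : κ → ℍ[ℝ]) :
    (∑ i ∈ s, f i) ⬝ᵥ z = ∑ i ∈ s, f i ⬝ᵥ z := by
  simp only [dotProduct, Finset.sum_apply, Finset.sum_mul]
  exact Finset.sum_comm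

private lemma dotProduct_sum' {ι κ : Type*} [Fintype κ] (s : Finset ι)
    (v : κ → ℍ[ℝ]) (f : ι → κ → ℍ[ℝ]) :
    v ⬝ᵥ (∑ i ∈ s, f i) = ∑ i ∈ s, v ⬝ᵥ f i := by
  simp only [dotProduct, Finset.sum_apply, Finset.mul_sum]
  exact Finset.sum_comm

private lemma mulVec_sum' {ι κ₁ κ₂ : Type*} [Fintype κ₁] (s : Finset ι)
    (Q : Matrix κ₂ κ₁ ℍ[ℝ]) (f : ι → κ₁ → ℍ[ℝ]) :
    Q *ᵥ (∑ i ∈ s, f i) = ∑ i ∈ s, Q *ᵥ f i := by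
  funext l
  simp only [Matrix.mulVec, dotProduct, Finset.sum_apply, Finset.mul_sum]
  exact Finset.sum_comm

set_option maxHeartbeats 2000000 in
theorem theta_kernel_identity_and_positivity (n : ℕ) (p s : Fin n → ℍ[ℝ])
    (hp : ∀ i, ‖p i‖ < 1) (hp1 : ∀ i, p i ≠ 1)
    (T : Matrix (Fin n) (Fin n) ℍ[ℝ]) (hT : T = Matrix.diagonal p)
    -- M = [E*; N*] : the 2×n matrix with rows Eᴴ and Nᴴ
    (M : Matrix (Fin 2) (Fin n) ℍ[ℝ])
    (hM : M = Matrix.of fun i j => if i = 0 then 1 else star (s j))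
    -- W = [E, -N] and W₂ = [E, N] : n×2 matrices
    (W W₂ : Matrix (Fin n) (Fin 2) ℍ[ℝ])
    (hW : W = Matrix.of fun i j => if j = 0 then 1 else -(s i))
    (hW₂ : W₂ = Matrix.of fun i j => if j = 0 then 1 else s i)
    -- P : positive definite Hermitian solution of the Stein equation
    (P : Matrix (Fin n) (Fin n) ℍ[ℝ]) (hHerm : Pᴴ = P)
    (hStein : P - T * P * Tᴴ
      = (Matrix.of fun (_ : Fin n) (_ : Fin n) => (1 : ℍ[ℝ]))
        - Matrix.of fun i j => s i * star (s j))
    (hPD : ∀ v : Fin n → ℍ[ℝ], v ≠ 0 → ∃ t : ℝ, 0 < t ∧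
      ∑ i : Fin n, ∑ j : Fin n, star (v i) * P i j * v j = (t : ℍ[ℝ]))
    -- Q = P⁻¹ and R = (Iₙ - T)⁻¹
    (Q : Matrix (Fin n) (Fin n) ℍ[ℝ]) (hQ1 : P * Q = 1) (hQ2 : Q * P = 1)
    (R : Matrix (Fin n) (Fin n) ℍ[ℝ]) (hR1 : (1 - T) * R = 1) (hR2 : R * (1 - T) = 1)
    -- Θ(p) = I₂ + (p-1) Σₖ pᵏ [E*;N*] T*ᵏ P⁻¹ (Iₙ-T)⁻¹ [E,-N], defined entrywise
    (Θ : ℍ[ℝ] → Matrix (Fin 2) (Fin 2) ℍ[ℝ])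
    (hΘ : ∀ x : ℍ[ℝ], ‖x‖ < 1 → ∀ i j : Fin 2,
      HasSum (fun k : ℕ => (x - 1) * x ^ k * (M * Tᴴ ^ k * Q * R * W) i j)
        (Θ x i j - (1 : Matrix (Fin 2) (Fin 2) ℍ[ℝ]) i j))
    -- A(p) = Σₖ pᵏ [E*;N*] T*ᵏ  and  C(q) = Σₖ Tᵏ [E,N] conj(q)ᵏ, entrywise
    (A : ℍ[ℝ] → Matrix (Fin 2) (Fin n) ℍ[ℝ])
    (hA : ∀ x : ℍ[ℝ], ‖x‖ < 1 → ∀ i j,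
      HasSum (fun k : ℕ => x ^ k * (M * Tᴴ ^ k) i j) (A x i j))
    (C : ℍ[ℝ] → Matrix (Fin n) (Fin 2) ℍ[ℝ])
    (hC : ∀ x : ℍ[ℝ], ‖x‖ < 1 → ∀ i j,
      HasSum (fun k : ℕ => (T ^ k * W₂) i j * (star x) ^ k) (C x i j))
    (J : Matrix (Fin 2) (Fin 2) ℍ[ℝ])
    (hJ : J = Matrix.diagonal fun i => if i = 0 then 1 else -1) :
    (∀ x y : ℍ[ℝ], ‖x‖ < 1 → ‖y‖ < 1 → ∀ i j : Fin 2,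
      HasSum (fun k : ℕ => x ^ k * ((J - Θ x * J * (Θ y)ᴴ) i j) * (star y) ^ k)
        ((A x * Q * C y) i j)) ∧
    ∀ (r : ℕ) (pts : Fin r → ℍ[ℝ]), (∀ l, ‖pts l‖ < 1) →
      ∀ c : Fin r → Fin 2 → ℍ[ℝ], ∃ t : ℝ, 0 ≤ t ∧
        ∑ i : Fin r, ∑ j : Fin r, ∑ a : Fin 2, ∑ b : Fin 2,
          star (c i a) * (A (pts i) * Q * C (pts j)) a b * c j b = (t : ℍ[ℝ]) := by
  -- basic structural facts
  have hMH : Mᴴ = W₂ := by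
    rw [hM, hW₂]
    refine Matrix.ext fun i j => ?_
    by_cases h : j = 0 <;> simp [Matrix.conjTranspose_apply, h]
  have hJJ : J * J = 1 := by
    rw [hJ, Matrix.diagonal_mul_diagonal]
    rw [show (fun i : Fin 2 => (if i = 0 then (1:ℍ[ℝ]) else -1) * (if i = 0 then 1 else -1))
      = fun _ => 1 from funext fun i => by by_cases h : i = 0 <;> simp [h]]
    exact Matrix.diagonal_one
  have hWJ : W * J = Mᴴ := by
    rw [hW, hJ, hM]
    refine Matrix.ext fun i j => ?_
    fin_cases j <;>
      simp [Matrix.mul_apply, Fin.sum_univ_two, Matrix.diagonal_apply,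
        Matrix.conjTranspose_apply]
  have hJWH : J * Wᴴ = M := by
    rw [hW, hJ, hM]
    refine Matrix.ext fun i j => ?_
    fin_cases i <;>
      simp [Matrix.mul_apply, Fin.sum_univ_two, Matrix.diagonal_apply,
        Matrix.conjTranspose_apply]
  have hWM : W * M = P - T * P * Tᴴ := by
    rw [hStein, hW, hM]
    refine Matrix.ext fun i j => ?_
    simp [Matrix.mul_apply, Fin.sum_univ_two, Matrix.sub_apply, sub_eq_add_neg]
  have hWJWH : W * (J * Wᴴ) = P - T * P * Tᴴ := by rw [hJWH]; exact hWM
  have hQH : Qᴴ = Q := by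
    have h1 : Qᴴ * P = 1 := by
      rw [← hHerm, ← Matrix.conjTranspose_mul, hQ1, Matrix.conjTranspose_one]
    calc Qᴴ = Qᴴ * (P * Q) := by rw [hQ1, Matrix.mul_one]
      _ = (Qᴴ * P) * Q := by rw [Matrix.mul_assoc]
      _ = Q := by rw [h1, Matrix.one_mul]
  have hRH2 : (1 - Tᴴ) * Rᴴ = 1 := by
    have e : (1 : Matrix (Fin n) (Fin n) ℍ[ℝ]) - Tᴴ = (1 - T)ᴴ := by
      rw [Matrix.conjTranspose_sub, Matrix.conjTranspose_one]
    rw [e, ← Matrix.conjTranspose_mul, hR2, Matrix.conjTranspose_one]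
  have hRT : R = 1 + R * T := by
    have h := hR2
    rw [Matrix.mul_sub, Matrix.mul_one] at h
    exact sub_eq_iff_eq_add.mp h
  have hRHT : Rᴴ = 1 + Tᴴ * Rᴴ := by
    have h := hRH2
    rw [Matrix.sub_mul, Matrix.one_mul] at h
    exact sub_eq_iff_eq_add.mp h
  have hKey : Q * R * (P - T * P * Tᴴ) * (Rᴴ * Q) = Rᴴ * Q + Q * R - Q := by
    have step1 : Q * R * (P - T * P * Tᴴ) * (Rᴴ * Q)
        = Q * ((R * (1 - T)) * (P * Rᴴ)) * Q + Q * ((R * P) * ((1 - Tᴴ) * Rᴴ)) * Q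
          - Q * ((R * (1 - T)) * (P * ((1 - Tᴴ) * Rᴴ))) * Q := by
      noncomm_ring
    rw [step1, hR2, hRH2]
    simp only [Matrix.one_mul, Matrix.mul_one]
    have t1 : Q * (P * Rᴴ) = Rᴴ := by rw [← mul_assoc, hQ2, one_mul]
    have t2 : Q * (R * P) * Q = Q * R := by
      rw [← mul_assoc, mul_assoc (Q * R), hQ1, mul_one]
    have t3 : Q * P * Q = Q := by rw [hQ2, one_mul]
    rw [t1, t2, t3]
  -- series-derived identities
  have hCA : ∀ z : ℍ[ℝ], ‖z‖ < 1 → C z = (A z)ᴴ := by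
    intro z hz
    refine Matrix.ext fun i j => ?_
    rw [Matrix.conjTranspose_apply]
    have base := (hA z hz j i).star
    have e : (fun k : ℕ => star (z ^ k * (M * Tᴴ ^ k) j i))
        = fun k => (T ^ k * W₂) i j * (star z) ^ k := by
      funext k
      rw [StarMul.star_mul, star_pow]
      congr 1
      rw [← Matrix.conjTranspose_apply, Matrix.conjTranspose_mul,
        Matrix.conjTranspose_pow, Matrix.conjTranspose_conjTranspose, hMH]
    rw [e] at base
    exact (hC z hz i j).unique base
  have hArec : ∀ z : ℍ[ℝ], ‖z‖ < 1 →
      A z = M + (z • (1 : Matrix (Fin 2) (Fin 2) ℍ[ℝ])) * (A z * Tᴴ) := by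
    intro z hz
    refine Matrix.ext fun i j => ?_
    have s1 := hsL z (fun k => M * Tᴴ ^ k) (A z) Tᴴ (hA z hz) i j
    have s2 := s1.mul_left z
    have e : (fun k : ℕ => z ^ (k+1) * (M * Tᴴ ^ (k+1)) i j)
        = fun k => z * (z ^ k * ((M * Tᴴ ^ k) * Tᴴ) i j) := by
      funext k
      rw [pow_succ' z k, pow_succ Tᴴ k, ← Matrix.mul_assoc, mul_assoc]
    have s3 : HasSum (fun k : ℕ => z ^ (k+1) * (M * Tᴴ ^ (k+1)) i j)
        (z * (A z * Tᴴ) i j) := by rw [e]; exact s2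
    have s4 := (hasSum_nat_add_iff
      (f := fun k : ℕ => z ^ k * (M * Tᴴ ^ k) i j) 1).mp s3
    have u := (hA z hz i j).unique s4
    rw [Matrix.add_apply, entryL, u]
    simp only [Finset.sum_range_one, pow_zero, one_mul, Matrix.mul_one]
    exact add_comm _ _
  have hCrec : ∀ z : ℍ[ℝ], ‖z‖ < 1 →
      C z = W₂ + (T * C z) * (star z • (1 : Matrix (Fin 2) (Fin 2) ℍ[ℝ])) := by
    intro z hz
    refine Matrix.ext fun i j => ?_
    have s1 := hsR (star z) (fun k => T ^ k * W₂) (C z) T (hC z hz) i j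
    have s2 := s1.mul_right (star z)
    have e : (fun k : ℕ => (T ^ (k+1) * W₂) i j * (star z) ^ (k+1))
        = fun k => ((T * (T ^ k * W₂)) i j * (star z) ^ k) * star z := by
      funext k
      rw [pow_succ' T k, pow_succ (star z) k, Matrix.mul_assoc, ← mul_assoc]
    have s3 : HasSum (fun k : ℕ => (T ^ (k+1) * W₂) i j * (star z) ^ (k+1))
        ((T * C z) i j * star z) := by rw [e]; exact s2
    have s4 := (hasSum_nat_add_iff
      (f := fun k : ℕ => (T ^ k * W₂) i j * (star z) ^ k) 1).mp s3
    have u := (hC z hz i j).unique s4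
    rw [Matrix.add_apply, entryR, u]
    simp only [Finset.sum_range_one, pow_zero, Matrix.one_mul, mul_one]
    exact add_comm _ _
  have hΘeq : ∀ z : ℍ[ℝ], ‖z‖ < 1 →
      Θ z = 1 + ((z • (1 : Matrix (Fin 2) (Fin 2) ℍ[ℝ])) - 1) * (A z * Q * R * W) := by
    intro z hz
    have l1 := hsL z (fun k => M * Tᴴ ^ k) (A z) Q (hA z hz)
    have l2 := hsL z (fun k => M * Tᴴ ^ k * Q) (A z * Q) R l1
    have l3 := hsL z (fun k => M * Tᴴ ^ k * Q * R) (A z * Q * R) W l2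
    refine Matrix.ext fun i j => ?_
    have sfin := (l3 i j).mul_left (z - 1)
    have e : (fun k : ℕ => (z - 1) * z ^ k * (M * Tᴴ ^ k * Q * R * W) i j)
        = fun k => (z - 1) * (z ^ k * (M * Tᴴ ^ k * Q * R * W) i j) := by
      funext k; rw [mul_assoc]
    have hh := hΘ z hz i j
    rw [e] at hh
    have u : Θ z i j - (1 : Matrix (Fin 2) (Fin 2) ℍ[ℝ]) i j
        = (z - 1) * (A z * Q * R * W) i j := hh.unique sfin
    rw [Matrix.add_apply]
    have e2 : ((((z • (1 : Matrix (Fin 2) (Fin 2) ℍ[ℝ])) - 1) * (A z * Q * R * W)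
          : Matrix (Fin 2) (Fin 2) ℍ[ℝ])) i j
        = (z - 1) * (A z * Q * R * W) i j := by
      have e3 : (z • (1 : Matrix (Fin 2) (Fin 2) ℍ[ℝ])) - 1
          = (z - 1) • (1 : Matrix (Fin 2) (Fin 2) ℍ[ℝ]) := by
        rw [sub_smul, one_smul]
      rw [e3, entryL]
    rw [e2, ← u]
    abel
  have hΘHeq : ∀ z : ℍ[ℝ], ‖z‖ < 1 →
      (Θ z)ᴴ = 1 + (Wᴴ * (Rᴴ * (Q * C z)))
        * ((star z • (1 : Matrix (Fin 2) (Fin 2) ℍ[ℝ])) - 1) := by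
    intro z hz
    rw [hΘeq z hz, Matrix.conjTranspose_add, Matrix.conjTranspose_one,
      Matrix.conjTranspose_mul, Matrix.conjTranspose_sub, smul_one_ct,
      Matrix.conjTranspose_one]
    congr 1
    congr 1
    rw [hCA z hz]
    simp only [Matrix.conjTranspose_mul, hQH, Matrix.mul_assoc]
  constructor
  · -- the kernel identity
    intro x y hx hy i j
    have hMeq : M = A x - (x • (1 : Matrix (Fin 2) (Fin 2) ℍ[ℝ])) * (A x * Tᴴ) :=
      eq_sub_of_add_eq (hArec x hx).symm
    have hW₂eq : W₂ = C y - (T * C y) * (star y • (1 : Matrix (Fin 2) (Fin 2) ℍ[ℝ])) :=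
      eq_sub_of_add_eq (hCrec y hy).symm
    have key3 : A x * (Q * (R * C y))
        = A x * (Q * (R * (T * C y))) + A x * Q * C y := by
      nth_rw 1 [hRT]
      simp only [Matrix.add_mul, Matrix.one_mul, Matrix.mul_add, Matrix.mul_assoc]
      abel
    have key2 : A x * (Rᴴ * (Q * C y))
        = A x * (Tᴴ * (Rᴴ * (Q * C y))) + A x * Q * C y := by
      nth_rw 1 [hRHT]
      simp only [Matrix.add_mul, Matrix.one_mul, Matrix.mul_add, Matrix.mul_assoc]
      abel
    have B1 : (A x * Q * R * W) * J
        = A x * (Q * (R * (T * C y))) + A x * Q * C y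
          - (A x * (Q * (R * (T * C y))))
            * (star y • (1 : Matrix (Fin 2) (Fin 2) ℍ[ℝ])) := by
      calc (A x * Q * R * W) * J
          = A x * (Q * (R * (W * J))) := by simp only [Matrix.mul_assoc]
        _ = A x * (Q * (R * (C y - (T * C y)
            * (star y • (1 : Matrix (Fin 2) (Fin 2) ℍ[ℝ]))))) := by
            rw [hWJ, hMH, hW₂eq]
        _ = A x * (Q * (R * C y)) - A x * (Q * (R * ((T * C y)
            * (star y • (1 : Matrix (Fin 2) (Fin 2) ℍ[ℝ]))))) := by
            simp only [Matrix.mul_sub]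
        _ = A x * (Q * (R * (T * C y))) + A x * Q * C y
            - (A x * (Q * (R * (T * C y))))
              * (star y • (1 : Matrix (Fin 2) (Fin 2) ℍ[ℝ])) := by
            rw [key3]
            congr 1
            simp only [Matrix.mul_assoc]
    have B2 : J * (Wᴴ * (Rᴴ * (Q * C y)))
        = A x * (Tᴴ * (Rᴴ * (Q * C y))) + A x * Q * C y
          - (x • (1 : Matrix (Fin 2) (Fin 2) ℍ[ℝ]))
            * (A x * (Tᴴ * (Rᴴ * (Q * C y)))) := by
      calc J * (Wᴴ * (Rᴴ * (Q * C y)))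
          = (J * Wᴴ) * (Rᴴ * (Q * C y)) := by rw [← Matrix.mul_assoc]
        _ = M * (Rᴴ * (Q * C y)) := by rw [hJWH]
        _ = A x * (Rᴴ * (Q * C y))
            - ((x • (1 : Matrix (Fin 2) (Fin 2) ℍ[ℝ])) * (A x * Tᴴ))
              * (Rᴴ * (Q * C y)) := by rw [hMeq, Matrix.sub_mul]
        _ = A x * (Tᴴ * (Rᴴ * (Q * C y))) + A x * Q * C y
            - (x • (1 : Matrix (Fin 2) (Fin 2) ℍ[ℝ]))
              * (A x * (Tᴴ * (Rᴴ * (Q * C y)))) := by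
            rw [key2]
            congr 1
            simp only [Matrix.mul_assoc]
    have B3 : (A x * Q * R * W) * (J * (Wᴴ * (Rᴴ * (Q * C y))))
        = A x * (Q * (R * (T * C y))) + A x * (Tᴴ * (Rᴴ * (Q * C y)))
          + A x * Q * C y := by
      calc (A x * Q * R * W) * (J * (Wᴴ * (Rᴴ * (Q * C y))))
          = (A x * (Q * R)) * ((W * (J * Wᴴ)) * (Rᴴ * (Q * C y))) := by
            simp only [Matrix.mul_assoc]
        _ = (A x * (Q * R)) * ((P - T * P * Tᴴ) * (Rᴴ * (Q * C y))) := by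
            rw [hWJWH]
        _ = A x * ((Q * R * (P - T * P * Tᴴ) * (Rᴴ * Q)) * C y) := by
            simp only [Matrix.mul_assoc]
        _ = A x * ((Rᴴ * Q + Q * R - Q) * C y) := by rw [hKey]
        _ = A x * (Rᴴ * (Q * C y)) + A x * (Q * (R * C y)) - A x * (Q * C y) := by
            simp only [Matrix.add_mul, Matrix.sub_mul, Matrix.mul_add,
              Matrix.mul_sub, Matrix.mul_assoc]
        _ = (A x * (Tᴴ * (Rᴴ * (Q * C y))) + A x * Q * C y)
            + (A x * (Q * (R * (T * C y))) + A x * Q * C y)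
            - A x * Q * C y := by
            rw [key2, key3]
            congr 1
            exact (Matrix.mul_assoc _ _ _).symm
        _ = A x * (Q * (R * (T * C y))) + A x * (Tᴴ * (Rᴴ * (Q * C y)))
            + A x * Q * C y := by abel
    have KEY := aux_abstract (A x * Q * R * W) (Wᴴ * (Rᴴ * (Q * C y))) J
      (A x * Q * C y) (A x * (Q * (R * (T * C y))))
      (A x * (Tᴴ * (Rᴴ * (Q * C y))))
      (x • (1 : Matrix (Fin 2) (Fin 2) ℍ[ℝ]))
      (star y • (1 : Matrix (Fin 2) (Fin 2) ℍ[ℝ])) B1 B2 B3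
    rw [← hΘeq x hx, ← hΘHeq y hy] at KEY
    have ha : (J - Θ x * J * (Θ y)ᴴ) i j
        = (A x * Q * C y) i j - x * (A x * Q * C y) i j * star y := by
      rw [KEY, Matrix.sub_apply]
      congr 1
      rw [entryR, entryL]
    exact aux_telescope x y hx hy ((A x * Q * C y) i j) _ ha
  · -- positivity
    intro r pts hpts c
    have hA' : ∀ i, A (pts i) = (C (pts i))ᴴ := fun i => by
      rw [hCA (pts i) (hpts i), Matrix.conjTranspose_conjTranspose]
    set U : Fin n → ℍ[ℝ] := ∑ i : Fin r, (C (pts i)) *ᵥ (c i) with hU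
    set w : Fin n → ℍ[ℝ] := Q *ᵥ U with hw
    have hUP : U = P *ᵥ w := by
      rw [hw, Matrix.mulVec_mulVec, hQ1, Matrix.one_mulVec]
    have step1 : ∀ i j : Fin r,
        (∑ a : Fin 2, ∑ b : Fin 2,
          star (c i a) * (A (pts i) * Q * C (pts j)) a b * c j b)
        = star (C (pts i) *ᵥ c i) ⬝ᵥ (Q *ᵥ (C (pts j) *ᵥ c j)) := by
      intro i j
      have e1 : (A (pts i) * Q * C (pts j)) *ᵥ c j
          = A (pts i) *ᵥ (Q *ᵥ (C (pts j) *ᵥ c j)) := by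
        simp [Matrix.mul_assoc]
      calc (∑ a : Fin 2, ∑ b : Fin 2,
            star (c i a) * (A (pts i) * Q * C (pts j)) a b * c j b)
          = star (c i) ⬝ᵥ ((A (pts i) * Q * C (pts j)) *ᵥ c j) := by
            simp only [dotProduct, Matrix.mulVec, Pi.star_apply,
              Finset.mul_sum, mul_assoc]
        _ = star (c i) ⬝ᵥ (A (pts i) *ᵥ (Q *ᵥ (C (pts j) *ᵥ c j))) := by rw [e1]
        _ = star (C (pts i) *ᵥ c i) ⬝ᵥ (Q *ᵥ (C (pts j) *ᵥ c j)) := by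
            rw [Matrix.dotProduct_mulVec, hA' i, ← Matrix.star_mulVec]
    have hS : (∑ i : Fin r, ∑ j : Fin r, ∑ a : Fin 2, ∑ b : Fin 2,
          star (c i a) * (A (pts i) * Q * C (pts j)) a b * c j b)
        = ∑ l : Fin n, ∑ m : Fin n, star (w l) * P l m * w m := by
      calc (∑ i : Fin r, ∑ j : Fin r, ∑ a : Fin 2, ∑ b : Fin 2,
            star (c i a) * (A (pts i) * Q * C (pts j)) a b * c j b)
          = ∑ i : Fin r, ∑ j : Fin r,
              star (C (pts i) *ᵥ c i) ⬝ᵥ (Q *ᵥ (C (pts j) *ᵥ c j)) :=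
            Finset.sum_congr rfl fun i _ => Finset.sum_congr rfl fun j _ => step1 i j
        _ = star U ⬝ᵥ (Q *ᵥ U) := by
            rw [hU, star_sum, mulVec_sum', sum_dotProduct']
            exact Finset.sum_congr rfl fun i _ => (dotProduct_sum' _ _ _).symm
        _ = star (P *ᵥ w) ⬝ᵥ w := by
            nth_rw 1 [hUP]
        _ = star w ⬝ᵥ (P *ᵥ w) := by
            rw [Matrix.star_mulVec, hHerm, ← Matrix.dotProduct_mulVec]
        _ = ∑ l : Fin n, ∑ m : Fin n, star (w l) * P l m * w m := by
            simp only [dotProduct, Matrix.mulVec, Pi.star_apply,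
              Finset.mul_sum, mul_assoc]
    by_cases hw0 : w = 0
    · refine ⟨0, le_refl 0, ?_⟩
      rw [hS, hw0]
      simp
    · obtain ⟨t, htpos, hteq⟩ := hPD w hw0
      exact ⟨t, le_of_lt htpos, by rw [hS]; exact hteq⟩
end
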